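/- arXiv:2402.13365 — 7 statements merged into one kernel-verified Lean document; each statement's English description precedes it below -/
import Mathlib

section
/- Let G be a group and let H be a weakly normal subgroup of G. Then H satisfies the subnormalizer condition in G. -/
/-- The conjugate `H^g = g⁻¹ H g` of a subgroup `H`. -/
def conjSubgroup {G : Type*} [Group G] (g : G) (H : Subgroup G) : Subgroup G :=
  H.map (MulAut.conj g⁻¹).toMonoidHom

/-- `H` is pronormal in `G` if for every `g ∈ G` there exists
`x ∈ ⟨H, H^g⟩` with `H^x = H^g`. -/
def IsPronormal {G : Type*} [Group G] (H : Subgroup G) : Prop :=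
  ∀ g : G, ∃ x ∈ H ⊔ conjSubgroup g H, conjSubgroup x H = conjSubgroup g H

/-- `H` is weakly normal in `G` if `H^g ≤ N_G(H)` implies `g ∈ N_G(H)`. -/
def IsWeaklyNormal {G : Type*} [Group G] (H : Subgroup G) : Prop :=
  ∀ g : G, conjSubgroup g H ≤ Subgroup.normalizer (H : Set G) → g ∈ Subgroup.normalizer (H : Set G)

/-- `H` is an `𝓗`-subgroup of `G` if `N_G(H) ∩ H^g ≤ H` for all `g ∈ G`. -/
def IsHSubgroup {G : Type*} [Group G] (H : Subgroup G) : Prop :=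
  ∀ g : G, Subgroup.normalizer (H : Set G) ⊓ conjSubgroup g H ≤ H

/-- `H` is an `NE`-subgroup of `G` if `H = N_G(H) ∩ H^G`. -/
def IsNESubgroup {G : Type*} [Group G] (H : Subgroup G) : Prop :=
  H = Subgroup.normalizer (H : Set G) ⊓ Subgroup.normalClosure (H : Set G)

/-- A subgroup `H` satisfies the subnormalizer condition in `G` if for every
subgroup `K` of `G` such that `H` is a normal subgroup of `K`, one has
`N_G(K) ≤ N_G(H)`. -/
def SubnormalizerCondition {G : Type*} [Group G] (H : Subgroup G) : Prop :=
  ∀ K : Subgroup G, H ≤ K → (H.subgroupOf K).Normal → Subgroup.normalizer (K : Set G) ≤ Subgroup.normalizer (H : Set G)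

theorem subnormalizerCondition_of_isWeaklyNormal
    {G : Type*} [Group G] {H : Subgroup G} (h : IsWeaklyNormal H) :
    SubnormalizerCondition H := by
  intro K hHK hnorm g hg
  -- K ≤ N_G(H)
  have hK : K ≤ Subgroup.normalizer (H : Set G) := by
    intro k hk
    rw [Subgroup.mem_normalizer_iff]
    intro n
    constructor
    · intro hn
      have := hnorm.conj_mem ⟨n, hHK hn⟩ (by simpa [Subgroup.mem_subgroupOf]) ⟨k, hk⟩
      simpa [Subgroup.mem_subgroupOf] using this
    · intro hn
      have := hnorm.conj_mem ⟨k * n * k⁻¹, hHK hn⟩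
        (by simpa [Subgroup.mem_subgroupOf]) ⟨k⁻¹, K.inv_mem hk⟩
      simpa [Subgroup.mem_subgroupOf, mul_assoc] using this
  apply h
  -- conjSubgroup g H ≤ K ≤ N_G(H)
  refine le_trans ?_ hK
  rintro x ⟨y, hy, rfl⟩
  have hgK := (Subgroup.mem_normalizer_iff.mp ((Subgroup.normalizer (K : Set G)).inv_mem hg)) y
  simpa using hgK.mp (hHK hy)
end

section
/- Let G be a group and let H be an NE-subgroup of G. Then H satisfies the subnormalizer condition in G. -/
theorem subnormalizerCondition_of_isNESubgroup
    {G : Type*} [Group G] {H : Subgroup G} (h : IsNESubgroup H) :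
    SubnormalizerCondition H := by
  intro K hHK hN g hg
  -- every element of K normalizes H
  have key : ∀ k ∈ K, ∀ x ∈ H, k * x * k⁻¹ ∈ H := by
    intro k hk x hx
    have := hN.conj_mem ⟨x, hHK hx⟩ (Subgroup.mem_subgroupOf.2 hx) ⟨k, hk⟩
    simpa [Subgroup.mem_subgroupOf] using this
  have hKnorm : K ≤ Subgroup.normalizer (H : Set G) := by
    intro k hk
    rw [Subgroup.mem_normalizer_iff]
    intro x
    constructor
    · exact fun hx => key k hk x hx
    · intro hx
      have := key k⁻¹ (K.inv_mem hk) _ hx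
      simpa [mul_assoc] using this
  -- conjugation by elements of N_G(K) preserves H
  have claim : ∀ u ∈ Subgroup.normalizer (K : Set G), ∀ x ∈ H, u⁻¹ * x * u ∈ H := by
    intro u hu x hx
    have hK' : u⁻¹ * x * u ∈ K := by
      have := (Subgroup.mem_normalizer_iff.1 ((Subgroup.normalizer (K : Set G)).inv_mem hu) x).1 (hHK hx)
      simpa using this
    have hNC : u⁻¹ * x * u ∈ Subgroup.normalClosure (H : Set G) := by
      have := (Subgroup.normalClosure_normal (s := (H : Set G))).conj_mem x
        (Subgroup.subset_normalClosure hx) u⁻¹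
      simpa using this
    rw [h]
    exact ⟨hKnorm hK', hNC⟩
  rw [Subgroup.mem_normalizer_iff]
  intro x
  constructor
  · intro hx
    have := claim g⁻¹ ((Subgroup.normalizer (K : Set G)).inv_mem hg) x hx
    simpa using this
  · intro hx
    have := claim g hg _ hx
    simpa [mul_assoc] using this
end

section
/- Let G be a finite group. Then the intersection of the normalizers of all pronormal subgroups of G equals the intersection of the normalizers of all Sylow subgroups of G (equivalently, the hypercenter Z_∞(G)). That is, ⋂_{H pronormal in G} N_G(H) = ⋂_{p prime, P ∈ Syl_p(G)} N_G(P). -/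
namespace PronormalProofAux

open Subgroup
open scoped commutatorElement

variable {G : Type*} [Group G]

lemma mem_conjSubgroup {g y : G} {H : Subgroup G} :
    y ∈ conjSubgroup g H ↔ g * y * g⁻¹ ∈ H := by
  constructor
  · rintro ⟨h, hh, rfl⟩
    simpa [mul_assoc] using hh
  · intro h
    exact ⟨g * y * g⁻¹, h, by simp [mul_assoc]⟩

lemma conjSubgroup_eq_iff {g : G} {H : Subgroup G} :
    conjSubgroup g H = H ↔ g ∈ Subgroup.normalizer (H : Set G) := by
  simp only [SetLike.ext_iff, mem_conjSubgroup, Subgroup.mem_normalizer_iff]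
  exact ⟨fun h y => (h y).symm, fun h y => (h y).symm⟩

lemma mem_coe_smul_sylow {p : ℕ} {g : G} {P : Sylow p G} {y : G} :
    y ∈ ((g • P : Sylow p G) : Subgroup G) ↔ g⁻¹ * y * g ∈ P := by
  rw [Sylow.coe_subgroup_smul, Subgroup.mem_pointwise_smul_iff_inv_smul_mem]
  simp only [← map_inv, MulAut.smul_def, MulAut.conj_apply, inv_inv, mul_assoc]
  exact Iff.rfl

lemma conjSubgroup_sylow {p : ℕ} (P : Sylow p G) (g : G) :
    conjSubgroup g (P : Subgroup G) = ((g⁻¹ • P : Sylow p G) : Subgroup G) := by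
  ext y
  rw [mem_conjSubgroup, mem_coe_smul_sylow, inv_inv]
  exact Iff.rfl

lemma sylow_isPronormal [Finite G] {p : ℕ} [Fact p.Prime] (P : Sylow p G) :
    IsPronormal (P : Subgroup G) := by
  intro g
  have hconj : conjSubgroup g (P : Subgroup G) = ((g⁻¹ • P : Sylow p G) : Subgroup G) :=
    conjSubgroup_sylow P g
  set Q : Sylow p G := g⁻¹ • P with hQdef
  set K : Subgroup G := (P : Subgroup G) ⊔ conjSubgroup g (P : Subgroup G) with hK
  have hPK : (P : Subgroup G) ≤ K := le_sup_left
  have hQK : (Q : Subgroup G) ≤ K := by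
    rw [hQdef, ← hconj]; exact le_sup_right
  obtain ⟨k, hk⟩ := MulAction.exists_smul_eq (↥K) (P.subtype hPK) (Q.subtype hQK)
  rw [Sylow.smul_subtype] at hk
  have hkPQ : ((k : G) • P) = Q := Sylow.subtype_injective hk
  refine ⟨(k : G)⁻¹, inv_mem k.2, ?_⟩
  rw [conjSubgroup_sylow, hconj, inv_inv, hkPQ]

/-- The intersection of the normalizers of all Sylow subgroups. -/
def sylNorm (G : Type*) [Group G] : Subgroup G :=
  ⨅ (p : ℕ) (_ : p.Prime) (P : Sylow p G), Subgroup.normalizer ((P : Subgroup G) : Set G)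

lemma sylNorm_le {p : ℕ} (hp : p.Prime) (P : Sylow p G) :
    sylNorm G ≤ Subgroup.normalizer ((P : Subgroup G) : Set G) :=
  iInf_le_of_le p (iInf_le_of_le hp (iInf_le _ P))

lemma sylNorm_normal : (sylNorm G).Normal := by
  constructor
  intro n hn c
  have hmem : ∀ (p : ℕ) (hp : p.Prime) (P : Sylow p G),
      c * n * c⁻¹ ∈ Subgroup.normalizer ((P : Subgroup G) : Set G) := by
    intro p hp P
    haveI : Fact p.Prime := ⟨hp⟩
    refine Sylow.smul_eq_iff_mem_normalizer.mp ?_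
    have h1 : n • (c⁻¹ • P) = c⁻¹ • P :=
      Sylow.smul_eq_iff_mem_normalizer.mpr (sylNorm_le hp (c⁻¹ • P) hn)
    calc (c * n * c⁻¹) • P = c • n • c⁻¹ • P := by rw [mul_smul, mul_smul]
      _ = c • c⁻¹ • P := by rw [h1]
      _ = P := smul_inv_smul c P
  simp only [sylNorm, Subgroup.mem_iInf]
  exact hmem

lemma sylNorm_inf_le [Finite G] {p : ℕ} [Fact p.Prime] (P P' : Sylow p G) :
    sylNorm G ⊓ (P : Subgroup G) ≤ (P' : Subgroup G) := by
  have h1 : IsPGroup p (sylNorm G ⊓ (P : Subgroup G) : Subgroup G) :=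
    P.isPGroup'.to_inf_right
  have h2 : sylNorm G ⊓ (P : Subgroup G) ≤ Subgroup.normalizer ((P' : Subgroup G) : Set G) :=
    le_trans inf_le_left (sylNorm_le Fact.out P')
  calc sylNorm G ⊓ (P : Subgroup G)
      = (sylNorm G ⊓ (P : Subgroup G)) ⊓ Subgroup.normalizer ((P' : Subgroup G) : Set G) :=
        (inf_eq_left.mpr h2).symm
    _ = (sylNorm G ⊓ (P : Subgroup G)) ⊓ (P' : Subgroup G) := h1.inf_normalizer_sylow P'
    _ ≤ (P' : Subgroup G) := inf_le_right

lemma sylNorm_inf_normal [Finite G] {p : ℕ} [Fact p.Prime] (P : Sylow p G) :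
    (sylNorm G ⊓ (P : Subgroup G)).Normal := by
  constructor
  intro x hx c
  refine Subgroup.mem_inf.mpr ⟨sylNorm_normal.conj_mem x hx.1 c, ?_⟩
  have hx' : x ∈ ((c⁻¹ • P : Sylow p G) : Subgroup G) :=
    sylNorm_inf_le P (c⁻¹ • P) hx
  rw [mem_coe_smul_sylow, inv_inv] at hx'
  exact hx'

lemma eq_top_of_sylows_le {G : Type*} [Group G] [Finite G] {K : Subgroup G}
    (h : ∀ r : ℕ, r.Prime → ∃ R : Sylow r G, (R : Subgroup G) ≤ K) : K = ⊤ := by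
  rw [← Subgroup.index_eq_one]
  by_contra hne
  obtain ⟨r, hr, hdvd⟩ := Nat.exists_prime_and_dvd hne
  haveI : Fact r.Prime := ⟨hr⟩
  obtain ⟨R, hR⟩ := h r hr
  haveI : (R : Subgroup G).FiniteIndex := ⟨Subgroup.index_ne_zero_of_finite⟩
  exact R.not_dvd_index (hdvd.trans (Subgroup.index_dvd_of_le hR))

lemma card_lt_of_lt [Finite G] {A B : Subgroup G} (h : A < B) :
    Nat.card A < Nat.card B := by
  have hs : (A : Set G) ⊂ (B : Set G) := SetLike.coe_ssubset_coe.mpr h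
  have := Set.Finite.card_lt_card (Set.toFinite (B : Set G)) hs
  simpa [Nat.card_coe_set_eq] using this

lemma inf_sylow_le_ucs [Finite G] {p : ℕ} [Fact p.Prime] (P : Sylow p G) :
    ∀ (n : ℕ) (X : Subgroup G), Nat.card X ≤ n → X.Normal →
      X ≤ sylNorm G ⊓ (P : Subgroup G) →
      X ≤ Subgroup.upperCentralSeries G (Nat.card X) := by
  intro n
  induction n with
  | zero =>
    intro X hcard _ _
    have := Nat.card_pos (α := X)
    omega
  | succ n IH =>
    intro X hcard hXnormal hXle
    rcases eq_or_ne X ⊥ with rfl | hXbot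
    · exact bot_le
    haveI := hXnormal
    have hXN : X ≤ sylNorm G := hXle.trans inf_le_left
    have hXP : X ≤ (P : Subgroup G) := hXle.trans inf_le_right
    set C := Subgroup.centralizer (X : Set G) with hC
    have hCnormal : C.Normal := by
      constructor
      intro c hc g
      rw [Subgroup.mem_centralizer_iff]
      intro x hx
      have hx' : g⁻¹ * x * g ∈ X := by
        simpa using hXnormal.conj_mem x hx g⁻¹
      have h1 : (g⁻¹ * x * g) * c = c * (g⁻¹ * x * g) :=
        Subgroup.mem_centralizer_iff.mp hc _ hx'
      have h2 := congrArg (fun t => g * t * g⁻¹) h1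
      simpa [mul_assoc] using h2
    have hQC : ∀ (q : ℕ), q.Prime → q ≠ p → ∀ Q : Sylow q G, (Q : Subgroup G) ≤ C := by
      intro q hq hqp Q u hu
      haveI : Fact q.Prime := ⟨hq⟩
      rw [Subgroup.mem_centralizer_iff]
      intro x hx
      have h1 : ⁅x, u⁆ ∈ X ⊓ (Q : Subgroup G) := by
        refine Subgroup.mem_inf.mpr ⟨?_, ?_⟩
        · have h2 : u * x⁻¹ * u⁻¹ ∈ X := hXnormal.conj_mem x⁻¹ (inv_mem hx) u
          have h3 : ⁅x, u⁆ = x * (u * x⁻¹ * u⁻¹) := by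
            rw [commutatorElement_def]; simp [mul_assoc]
          rw [h3]
          exact mul_mem hx h2
        · have h2 : x * u * x⁻¹ ∈ Q :=
            (Subgroup.mem_normalizer_iff.mp (sylNorm_le Fact.out Q (hXN hx)) u).mp hu
          rw [commutatorElement_def]
          exact mul_mem h2 (inv_mem hu)
      have h2 : X ⊓ (Q : Subgroup G) = ⊥ :=
        disjoint_iff.mp (IsPGroup.disjoint_of_ne p q hqp.symm X (Q : Subgroup G)
          (P.isPGroup'.to_le hXP) Q.isPGroup')
      rw [h2, Subgroup.mem_bot] at h1
      exact commutatorElement_eq_one_iff_mul_comm.mp h1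
    have hXp : IsPGroup p X := P.isPGroup'.to_le hXP
    have hPC : (P : Subgroup G) ⊔ C = ⊤ := by
      apply eq_top_of_sylows_le
      intro r hr
      rcases eq_or_ne r p with rfl | hrp
      · exact ⟨P, le_sup_left⟩
      · haveI : Fact r.Prime := ⟨hr⟩
        obtain ⟨R⟩ : Nonempty (Sylow r G) := inferInstance
        exact ⟨R, (hQC r hr hrp R).trans le_sup_right⟩
    haveI := hCnormal
    have hcomm : ⁅X, (⊤ : Subgroup G)⁆ ≤ ⁅X, (P : Subgroup G)⁆ := by
      rw [Subgroup.commutator_le]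
      intro x hx g _
      have hg : g ∈ ((P : Subgroup G) ⊔ C : Subgroup G) := hPC ▸ Subgroup.mem_top g
      rw [← SetLike.mem_coe, Subgroup.mul_normal] at hg
      obtain ⟨a, ha, c, hc, rfl⟩ := hg
      have hxc : x * c = c * x := Subgroup.mem_centralizer_iff.mp hc x hx
      have hswap : c * x⁻¹ = x⁻¹ * c := by
        calc c * x⁻¹ = x⁻¹ * (x * c) * x⁻¹ := by simp [mul_assoc]
          _ = x⁻¹ * (c * x) * x⁻¹ := by rw [hxc]
          _ = x⁻¹ * c := by simp [mul_assoc]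
      have hkey : ⁅x, a * c⁆ = ⁅x, a⁆ := by
        simp only [commutatorElement_def, mul_inv_rev]
        calc x * (a * c) * x⁻¹ * (c⁻¹ * a⁻¹)
            = x * a * (c * x⁻¹) * (c⁻¹ * a⁻¹) := by simp only [mul_assoc]
          _ = x * a * (x⁻¹ * c) * (c⁻¹ * a⁻¹) := by rw [hswap]
          _ = x * a * x⁻¹ * a⁻¹ := by simp [mul_assoc]
      rw [hkey]
      exact Subgroup.commutator_mem_commutator hx ha
    have hYX : ⁅X, (P : Subgroup G)⁆ ≤ X := Subgroup.commutator_le_left _ _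
    have hYP : ⁅X, (P : Subgroup G)⁆ ≤ (P : Subgroup G) := by
      rw [Subgroup.commutator_le]
      intro x hx a ha
      have h1 : x * a * x⁻¹ ∈ P :=
        (Subgroup.mem_normalizer_iff.mp (sylNorm_le Fact.out P (hXN hx)) a).mp ha
      rw [commutatorElement_def]
      exact mul_mem h1 (inv_mem ha)
    have hne : ⁅X, (⊤ : Subgroup G)⁆ ≠ X := by
      intro heq
      have hX_le : ∀ m, X ≤ Subgroup.map (P : Subgroup G).subtype
          (Subgroup.lowerCentralSeries (⊤ : Subgroup ↥(P : Subgroup G)) m) := by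
        intro m
        induction m with
        | zero =>
          rw [Subgroup.lowerCentralSeries_zero, ← MonoidHom.range_eq_map, Subgroup.range_subtype]
          exact hXP
        | succ m ih =>
          have hstep : X ≤ ⁅X, (P : Subgroup G)⁆ := le_trans (le_of_eq heq.symm) hcomm
          refine hstep.trans ?_
          calc ⁅X, (P : Subgroup G)⁆
              ≤ ⁅Subgroup.map (P : Subgroup G).subtype (Subgroup.lowerCentralSeries (⊤ : Subgroup ↥(P : Subgroup G)) m),
                  Subgroup.map (P : Subgroup G).subtype ⊤⁆ :=
                Subgroup.commutator_mono ih
                  (by rw [← MonoidHom.range_eq_map, Subgroup.range_subtype])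
            _ = Subgroup.map (P : Subgroup G).subtype ⁅Subgroup.lowerCentralSeries (⊤ : Subgroup ↥(P : Subgroup G)) m, ⊤⁆ :=
                (Subgroup.map_commutator _ _ _).symm
            _ = Subgroup.map (P : Subgroup G).subtype (Subgroup.lowerCentralSeries (⊤ : Subgroup ↥(P : Subgroup G)) (m + 1)) := rfl
      haveI : Group.IsNilpotent ↥(P : Subgroup G) := P.isPGroup'.isNilpotent
      obtain ⟨m, hm⟩ := Subgroup.nilpotent_iff_lowerCentralSeries.mp this
      have h3 := hX_le m
      rw [hm, Subgroup.map_bot] at h3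
      exact hXbot (le_bot_iff.mp h3)
    set Y : Subgroup G := ⁅X, (⊤ : Subgroup G)⁆ with hYdef
    have hYlt : Y < X := lt_of_le_of_ne (hcomm.trans hYX) hne
    have hcardlt : Nat.card Y < Nat.card X := card_lt_of_lt hYlt
    haveI hYnormal : Y.Normal := Subgroup.commutator_normal X ⊤
    have hY := IH Y (by omega) hYnormal
      (le_inf ((hcomm.trans hYX).trans hXN) (hcomm.trans hYP))
    have hstep : X ≤ Subgroup.upperCentralSeries G (Nat.card Y + 1) := by
      intro x hx
      rw [Subgroup.mem_upperCentralSeries_succ_iff]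
      intro y
      exact hY (Subgroup.commutator_mem_commutator hx (Subgroup.mem_top y))
    exact hstep.trans (Subgroup.upperCentralSeries_mono G (by omega))

lemma sylNorm_le_ucs [Finite G] : sylNorm G ≤ Subgroup.upperCentralSeries G (Nat.card G) := by
  set M : Subgroup G :=
    ⨆ (p : ℕ) (_ : p.Prime) (P : Sylow p G), (sylNorm G ⊓ (P : Subgroup G)) with hM
  have hMucs : M ≤ Subgroup.upperCentralSeries G (Nat.card G) := by
    refine iSup_le fun p => iSup_le fun hp => iSup_le fun P => ?_
    haveI : Fact p.Prime := ⟨hp⟩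
    have h1 := inf_sylow_le_ucs P (Nat.card (sylNorm G ⊓ (P : Subgroup G) : Subgroup G))
      (sylNorm G ⊓ (P : Subgroup G)) le_rfl (sylNorm_inf_normal P) le_rfl
    exact h1.trans (Subgroup.upperCentralSeries_mono G (Subgroup.card_le_card_group _))
  refine le_trans ?_ hMucs
  intro n hn
  have hsub : M.subgroupOf (sylNorm G) = ⊤ := by
    apply eq_top_of_sylows_le
    intro r hr
    haveI : Fact r.Prime := ⟨hr⟩
    obtain ⟨S⟩ : Nonempty (Sylow r ↥(sylNorm G)) := inferInstance
    refine ⟨S, ?_⟩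
    have hmap : IsPGroup r (Subgroup.map (sylNorm G).subtype (S : Subgroup ↥(sylNorm G))) :=
      S.isPGroup'.map _
    obtain ⟨R, hR⟩ := hmap.exists_le_sylow
    intro s hs
    have h1 : (s : G) ∈ Subgroup.map (sylNorm G).subtype (S : Subgroup ↥(sylNorm G)) :=
      ⟨s, hs, rfl⟩
    have h2 : (s : G) ∈ sylNorm G ⊓ (R : Subgroup G) := ⟨s.2, hR h1⟩
    have h3 : sylNorm G ⊓ (R : Subgroup G) ≤ M :=
      le_iSup_of_le r (le_iSup_of_le hr (le_iSup_of_le R le_rfl))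
    exact Subgroup.mem_subgroupOf.mpr (h3 h2)
  have h4 : (⟨n, hn⟩ : ↥(sylNorm G)) ∈ M.subgroupOf (sylNorm G) := by
    rw [hsub]; exact Subgroup.mem_top _
  exact Subgroup.mem_subgroupOf.mp h4

lemma ucs_le_normalizer_of_isPronormal {H : Subgroup G} (hH : IsPronormal H) :
    ∀ n, Subgroup.upperCentralSeries G n ≤ Subgroup.normalizer (H : Set G) := by
  intro n
  induction n with
  | zero => rw [Subgroup.upperCentralSeries_zero]; exact bot_le
  | succ n ih =>
    intro z hz
    have h1 : conjSubgroup z H ≤ H ⊔ Subgroup.upperCentralSeries G n := by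
      rintro y ⟨h, hh, rfl⟩
      have h2 : h⁻¹ * z⁻¹ * h * z ∈ Subgroup.upperCentralSeries G n := by
        have h3 := Subgroup.mem_upperCentralSeries_succ_iff.mp
          ((Subgroup.upperCentralSeries G (n + 1)).inv_mem hz) h⁻¹
        have h4 := (Subgroup.upperCentralSeries G n).inv_mem h3
        simpa [commutatorElement_def, mul_assoc] using h4
      have h5 : (MulAut.conj z⁻¹).toMonoidHom h = h * (h⁻¹ * z⁻¹ * h * z) := by
        simp [mul_assoc]
      rw [h5]
      exact mul_mem (Subgroup.mem_sup_left hh) (Subgroup.mem_sup_right h2)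
    obtain ⟨x, hx, hxz⟩ := hH z
    have hxnorm : x ∈ Subgroup.normalizer (H : Set G) := by
      have h6 : H ⊔ conjSubgroup z H ≤ Subgroup.normalizer (H : Set G) :=
        sup_le Subgroup.le_normalizer (h1.trans (sup_le Subgroup.le_normalizer ih))
      exact h6 hx
    exact conjSubgroup_eq_iff.mp (hxz.symm.trans (conjSubgroup_eq_iff.mpr hxnorm))

end PronormalProofAux

theorem iInf_normalizer_pronormal_eq_iInf_normalizer_sylow
    (G : Type*) [Group G] [Finite G] :
    (⨅ (H : Subgroup G) (_ : IsPronormal H), Subgroup.normalizer (H : Set G)) =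
      ⨅ (p : ℕ) (_ : p.Prime) (P : Sylow p G), Subgroup.normalizer ((P : Subgroup G) : Set G) := by
  open PronormalProofAux in
  apply le_antisymm
  · refine le_iInf fun p => le_iInf fun hp => le_iInf fun P => ?_
    haveI : Fact p.Prime := ⟨hp⟩
    exact (iInf_le _ (P : Subgroup G)).trans
      (iInf_le _ (PronormalProofAux.sylow_isPronormal P))
  · refine le_iInf fun H => le_iInf fun hH => ?_
    exact (PronormalProofAux.sylNorm_le_ucs (G := G)).trans
      (PronormalProofAux.ucs_le_normalizer_of_isPronormal hH (Nat.card G))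
end

section
/- Let G be a finite group. Then the intersection of the normalizers of all 𝓗-subgroups of G equals the intersection of the normalizers of all Sylow subgroups of G (equivalently, the hypercenter Z_∞(G)). That is, ⋂_{H an 𝓗-subgroup of G} N_G(H) = ⋂_{p prime, P ∈ Syl_p(G)} N_G(P). -/
open commutatorElement

section Aux
variable {G : Type*} [Group G]

lemma mem_conjSubgroup_iff {g x : G} {H : Subgroup G} :
    x ∈ conjSubgroup g H ↔ g * x * g⁻¹ ∈ H := by
  constructor
  · rintro ⟨h, hh, rfl⟩
    simpa [MulAut.conj_apply, mul_assoc] using hh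
  · intro hx
    exact ⟨g * x * g⁻¹, hx, by simp [MulAut.conj_apply]; group⟩

lemma card_conjSubgroup (g : G) (H : Subgroup G) :
    Nat.card (conjSubgroup g H) = Nat.card H :=
  (Nat.card_congr (H.equivMapOfInjective _ (MulAut.conj g⁻¹).injective).toEquiv).symm

lemma subgroup_eq_of_le_of_card_le {A B : Subgroup G} [Finite G] (h : A ≤ B)
    (hc : Nat.card B ≤ Nat.card A) : A = B := by
  have := Set.eq_of_subset_of_ncard_le (show (A : Set G) ⊆ B from h)
    (by rwa [← Nat.card_coe_set_eq, ← Nat.card_coe_set_eq]) (Set.toFinite _)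
  exact SetLike.coe_injective this

lemma IsHSubgroup.isWeaklyNormal [Finite G] {H : Subgroup G} (hH : IsHSubgroup H) :
    IsWeaklyNormal H := by
  intro g hg
  have hle : conjSubgroup g H ≤ H := fun x hx => hH g ⟨hg hx, hx⟩
  have heq : conjSubgroup g H = H :=
    subgroup_eq_of_le_of_card_le hle (le_of_eq (card_conjSubgroup g H).symm)
  rw [Subgroup.mem_normalizer_iff]
  intro h
  rw [← heq, mem_conjSubgroup_iff, heq]

lemma IsWeaklyNormal.absorb {H K : Subgroup G} (hH : IsWeaklyNormal H)
    (hK : ⁅K, (⊤ : Subgroup G)⁆ ≤ Subgroup.normalizer (H : Set G)) : K ≤ Subgroup.normalizer (H : Set G) := by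
  intro z hz
  apply hH
  intro y hy
  rw [mem_conjSubgroup_iff] at hy
  have h1 : (z * y * z⁻¹) ∈ Subgroup.normalizer (H : Set G) := Subgroup.le_normalizer hy
  have h2 : ⁅(z * y * z⁻¹)⁻¹, z⁻¹⁆ ∈ ⁅K, (⊤ : Subgroup G)⁆ := by
    rw [Subgroup.commutator_comm]
    exact Subgroup.commutator_mem_commutator (Subgroup.mem_top _) (K.inv_mem hz)
  have : y = (z * y * z⁻¹) * ⁅(z * y * z⁻¹)⁻¹, z⁻¹⁆ := by group
  rw [this]
  exact mul_mem h1 (hK h2)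

lemma le_sylow_of_isPGroup {p : ℕ} [Fact p.Prime] {K : Subgroup G} (hK : IsPGroup p K)
    (P : Sylow p G) (h : K ≤ Subgroup.normalizer ((P : Subgroup G) : Set G)) : K ≤ P := by
  have h2 := hK.inf_normalizer_sylow P
  rw [inf_eq_left.mpr (show K ≤ Subgroup.normalizer (P : Set G) from h)] at h2
  rw [h2]
  exact inf_le_right

lemma conjSubgroup_isPGroup {p : ℕ} (g : G) {H : Subgroup G} (h : IsPGroup p H) :
    IsPGroup p (conjSubgroup g H) := h.map _

lemma sylow_isHSubgroup {p : ℕ} [Fact p.Prime] (P : Sylow p G) :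
    IsHSubgroup (P : Subgroup G) := by
  intro g x hx
  obtain ⟨hxn, hxc⟩ := hx
  have hzp : IsPGroup p (Subgroup.zpowers x) :=
    (conjSubgroup_isPGroup g P.isPGroup').to_le (Subgroup.zpowers_le.mpr hxc)
  exact le_sylow_of_isPGroup hzp P (Subgroup.zpowers_le.mpr hxn) (Subgroup.mem_zpowers x)

end Aux

open Pointwise

section Aux2
variable {G : Type*} [Group G]

/-- In a finite `p`-group context: a normal subgroup `Q ≤ P` with `⁅Q, P⁆ = Q` is trivial. -/
lemma commutator_eq_self_imp_bot {p : ℕ} [Fact p.Prime] [Finite G] (P : Sylow p G)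
    (Q : Subgroup G) (hQP : Q ≤ (P : Subgroup G))
    (h : ⁅Q, (P : Subgroup G)⁆ = Q) : Q = ⊥ := by
  set N : Subgroup (P : Subgroup G) := Q.subgroupOf (P : Subgroup G) with hN
  have hmap : N.map (P : Subgroup G).subtype = Q := by
    rw [hN, Subgroup.subgroupOf_map_subtype, inf_eq_left.mpr hQP]
  have htop : (⊤ : Subgroup (P : Subgroup G)).map (P : Subgroup G).subtype = (P : Subgroup G) := by
    rw [← MonoidHom.range_eq_map, Subgroup.range_subtype]
  have hcomm : ⁅N, (⊤ : Subgroup (P : Subgroup G))⁆ = N := by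
    apply Subgroup.map_injective (P : Subgroup G).subtype_injective
    rw [Subgroup.map_commutator, hmap, htop, h]
  haveI : Group.IsNilpotent (P : Subgroup G) := P.isPGroup'.isNilpotent
  have hlcs : ∀ n, N ≤ Subgroup.lowerCentralSeries (⊤ : Subgroup (P : Subgroup G)) n := by
    intro n
    induction n with
    | zero => exact le_top
    | succ n ih =>
      rw [lowerCentralSeries_succ, ← hcomm]
      exact Subgroup.commutator_mono ih le_top
  obtain ⟨n, hn⟩ := nilpotent_iff_lowerCentralSeries.mp ‹Group.IsNilpotent (P : Subgroup G)›
  have hNbot : N = ⊥ := le_bot_iff.mp (hn ▸ hlcs n)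
  rw [← hmap, hNbot, Subgroup.map_bot]

/-- Membership in the conjugated Sylow subgroup. -/
lemma mem_smul_sylow {p : ℕ} {g x : G} {P : Sylow p G} :
    x ∈ ((g • P : Sylow p G) : Subgroup G) ↔ g⁻¹ * x * g ∈ P := by
  rw [Sylow.coe_subgroup_smul, Subgroup.mem_pointwise_smul_iff_inv_smul_mem]
  have : (MulAut.conj g)⁻¹ • x = g⁻¹ * x * g := by
    simp [MulAut.conj_inv_apply]
  rw [this]
  rfl

lemma Subgroup.Normal.centralizer_normal {Q : Subgroup G} (hQ : Q.Normal) :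
    (Subgroup.centralizer (Q : Set G)).Normal := by
  constructor
  intro c hc g
  rw [Subgroup.mem_centralizer_iff] at hc ⊢
  intro x hx
  have h1 : g⁻¹ * x * g ∈ Q := by
    have := hQ.conj_mem x hx g⁻¹
    simpa using this
  have h2 := hc _ h1
  calc x * (g * c * g⁻¹) = g * ((g⁻¹ * x * g) * c) * g⁻¹ := by group
    _ = g * (c * (g⁻¹ * x * g)) * g⁻¹ := by rw [h2]
    _ = (g * c * g⁻¹) * x := by group

end Aux2
section Main
open Pointwise
variable {G : Type*} [Group G]

lemma sylNorm_le_normalizer [Finite G] (D H : Subgroup G)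
    (hDle : ∀ p : ℕ, p.Prime → ∀ P : Sylow p G, D ≤ Subgroup.normalizer ((P : Subgroup G) : Set G))
    (hDnorm : D.Normal) (hH : IsWeaklyNormal H) : D ≤ Subgroup.normalizer (H : Set G) := by
  -- Per-prime main step: `D ⊓ P ≤ N(H)` for every Sylow subgroup `P`.
  have main : ∀ (p : ℕ), p.Prime → ∀ P : Sylow p G, D ⊓ (P : Subgroup G) ≤ Subgroup.normalizer (H : Set G) := by
    intro p hp P
    haveI : Fact p.Prime := ⟨hp⟩
    set Q : Subgroup G := D ⊓ (P : Subgroup G) with hQdef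
    -- the intersection does not depend on the chosen Sylow subgroup
    have hQP' : ∀ P' : Sylow p G, D ⊓ (P' : Subgroup G) = Q := by
      have key : ∀ P₁ P₂ : Sylow p G, D ⊓ (P₁ : Subgroup G) ≤ D ⊓ (P₂ : Subgroup G) := by
        intro P₁ P₂
        refine le_inf inf_le_left ?_
        exact le_sylow_of_isPGroup (P₁.isPGroup'.to_le inf_le_right) P₂
          (inf_le_left.trans (hDle p hp P₂))
      intro P'
      exact le_antisymm (key P' P) (key P P')
    have hQnormal : Q.Normal := by
      constructor
      intro q hq g
      have hq' : q ∈ D ⊓ ((g⁻¹ • P : Sylow p G) : Subgroup G) := (hQP' (g⁻¹ • P)) ▸ hq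
      have hqP : g * q * g⁻¹ ∈ P := by
        have := (Subgroup.mem_inf.mp hq').2
        rwa [mem_smul_sylow, inv_inv] at this
      exact Subgroup.mem_inf.mpr
        ⟨hDnorm.conj_mem q (Subgroup.mem_inf.mp hq).1 g, hqP⟩
    have hQleS : ∀ P' : Sylow p G, Q ≤ (P' : Subgroup G) := by
      intro P'
      rw [← hQP' P']
      exact inf_le_right
    -- every Sylow subgroup for a different prime centralizes `Q`
    have hcent : ∀ q : ℕ, q.Prime → q ≠ p → ∀ S : Sylow q G,
        (S : Subgroup G) ≤ Subgroup.centralizer (Q : Set G) := by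
      intro q hq hqp S s hs
      rw [Subgroup.mem_centralizer_iff]
      intro x hx
      have hxQ : x ∈ Q := hx
      have hxD : x ∈ D := (Subgroup.mem_inf.mp hxQ).1
      have hxn : x ∈ Subgroup.normalizer ((S : Subgroup G) : Set G) := hDle q hq S hxD
      have h1 : x⁻¹ * s⁻¹ * x ∈ (S : Subgroup G) := by
        refine (Subgroup.mem_normalizer_iff.mp hxn (x⁻¹ * s⁻¹ * x)).mpr ?_
        simpa [mul_assoc] using (S : Subgroup G).inv_mem hs
      have hcS : x⁻¹ * s⁻¹ * x * s ∈ (S : Subgroup G) := mul_mem h1 hs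
      have hcQ : x⁻¹ * s⁻¹ * x * s ∈ Q := by
        have h2 : s⁻¹ * x * s ∈ Q := by simpa using hQnormal.conj_mem x hxQ s⁻¹
        have h3 : x⁻¹ * s⁻¹ * x * s = x⁻¹ * (s⁻¹ * x * s) := by group
        rw [h3]
        exact mul_mem (Q.inv_mem hxQ) h2
      -- the commutator is trivial since its order divides coprime prime powers
      have hc1 : x⁻¹ * s⁻¹ * x * s = 1 := by
        obtain ⟨k, hk⟩ := (P.isPGroup'.to_le (hQleS P)) ⟨_, hcQ⟩
        obtain ⟨m, hm⟩ := S.isPGroup' ⟨_, hcS⟩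
        have hkG : (x⁻¹ * s⁻¹ * x * s) ^ p ^ k = 1 := by
          exact_mod_cast congrArg (Subgroup.subtype _) hk
        have hmG : (x⁻¹ * s⁻¹ * x * s) ^ q ^ m = 1 := by
          exact_mod_cast congrArg (Subgroup.subtype _) hm
        have hdvd1 := orderOf_dvd_of_pow_eq_one hkG
        have hdvd2 := orderOf_dvd_of_pow_eq_one hmG
        have hcop : Nat.Coprime (p ^ k) (q ^ m) :=
          Nat.Coprime.pow _ _ ((Nat.coprime_primes hp hq).mpr (Ne.symm hqp))
        have : orderOf (x⁻¹ * s⁻¹ * x * s) = 1 :=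
          Nat.eq_one_of_dvd_coprimes hcop hdvd1 hdvd2
        rwa [orderOf_eq_one_iff] at this
      calc x * s = s * (x * (x⁻¹ * s⁻¹ * x * s)) := by group
        _ = s * (x * 1) := by rw [hc1]
        _ = s * x := by group
    set C : Subgroup G := Subgroup.centralizer (Q : Set G) with hCdef
    haveI hCn : C.Normal := hQnormal.centralizer_normal
    -- `P ⊔ C = ⊤` by a counting argument
    have hsup : (P : Subgroup G) ⊔ C = ⊤ := by
      apply Subgroup.eq_top_of_card_eq
      have h1 : Nat.card ((P : Subgroup G) ⊔ C : Subgroup G) ∣ Nat.card G :=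
        Subgroup.card_subgroup_dvd_card _
      have h2 : Nat.card G ∣ Nat.card ((P : Subgroup G) ⊔ C : Subgroup G) := by
        have hne1 : Nat.card ((P : Subgroup G) ⊔ C : Subgroup G) ≠ 0 := Nat.card_pos.ne'
        have hne2 : (Nat.card G) ≠ 0 := Nat.card_pos.ne'
        rw [← Nat.factorization_le_iff_dvd hne2 hne1, Finsupp.le_def]
        intro r
        by_cases hr : r.Prime
        · haveI : Fact r.Prime := ⟨hr⟩
          rw [← Nat.Prime.pow_dvd_iff_le_factorization hr hne1]
          by_cases hrp : r = p
          · subst hrp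
            have hcard := P.card_eq_multiplicity
            calc r ^ (Nat.card G).factorization r = Nat.card (P : Subgroup G) := hcard.symm
              _ ∣ _ := Subgroup.card_dvd_of_le le_sup_left
          · obtain ⟨S⟩ := (inferInstance : Nonempty (Sylow r G))
            have hSC : (S : Subgroup G) ≤ (P : Subgroup G) ⊔ C :=
              (hcent r hr hrp S).trans le_sup_right
            calc r ^ (Nat.card G).factorization r = Nat.card (S : Subgroup G) :=
                  S.card_eq_multiplicity.symm
              _ ∣ _ := Subgroup.card_dvd_of_le hSC
        · simp [Nat.factorization_eq_zero_of_not_prime _ hr]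
      exact Nat.dvd_antisymm h1 h2
    -- induction on the order of a normal subgroup inside `Q`
    have hrec : ∀ (n : ℕ) (Q' : Subgroup G), Nat.card Q' ≤ n → Q'.Normal → Q' ≤ Q →
        Q' ≤ Subgroup.normalizer (H : Set G) := by
      intro n
      induction n with
      | zero =>
        intro Q' h0 _ _
        exact absurd h0 (by have := Nat.card_pos (α := Q'); omega)
      | succ n ih =>
        intro Q' hcard hnorm hle
        by_cases hbot : Q' = ⊥
        · subst hbot; exact bot_le
        · haveI := hnorm
          have hQ''le : ⁅Q', (⊤ : Subgroup G)⁆ ≤ Q' := Subgroup.commutator_le_left _ _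
          have hQ''P : ⁅Q', (⊤ : Subgroup G)⁆ ≤ ⁅Q', (P : Subgroup G)⁆ := by
            rw [Subgroup.commutator_le]
            intro a ha b _
            have hbmem : b ∈ ((P : Subgroup G) : Set G) * (C : Set G) := by
              rw [← Subgroup.mul_normal]
              exact hsup ▸ Subgroup.mem_top b
            obtain ⟨s, hs, c, hc, rfl⟩ := hbmem
            have h1 : c * a⁻¹ = a⁻¹ * c :=
              (Subgroup.mem_centralizer_iff.mp hc a⁻¹ (hle (Q'.inv_mem ha))).symm
            have h2 : ⁅a, s * c⁆ = ⁅a, s⁆ := by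
              rw [commutatorElement_def, commutatorElement_def]
              calc a * (s * c) * a⁻¹ * (s * c)⁻¹ = a * s * (c * a⁻¹) * (c⁻¹ * s⁻¹) := by group
                _ = a * s * (a⁻¹ * c) * (c⁻¹ * s⁻¹) := by rw [h1]
                _ = a * s * a⁻¹ * s⁻¹ := by group
            rw [h2]
            exact Subgroup.commutator_mem_commutator ha hs
          have hQ''lt : ⁅Q', (⊤ : Subgroup G)⁆ < Q' := by
            refine lt_of_le_of_ne hQ''le ?_
            intro heq
            have h6 : Q' ≤ ⁅Q', (P : Subgroup G)⁆ := by
              calc Q' = ⁅Q', (⊤ : Subgroup G)⁆ := heq.symm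
                _ ≤ ⁅Q', (P : Subgroup G)⁆ := hQ''P
            have h5 : ⁅Q', (P : Subgroup G)⁆ = Q' :=
              le_antisymm (Subgroup.commutator_le_left _ _) h6
            exact hbot (commutator_eq_self_imp_bot P Q' (hle.trans (hQleS P)) h5)
          have hcard'' : Nat.card (⁅Q', (⊤ : Subgroup G)⁆ : Subgroup G) ≤ n := by
            have hlt : Nat.card (⁅Q', (⊤ : Subgroup G)⁆ : Subgroup G) < Nat.card Q' := by
              have h7 : ((⁅Q', (⊤ : Subgroup G)⁆ : Subgroup G) : Set G) ⊂ (Q' : Set G) :=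
                SetLike.coe_ssubset_coe.mpr hQ''lt
              have h8 := Set.ncard_lt_ncard h7 (Set.toFinite _)
              rwa [← Nat.card_coe_set_eq, ← Nat.card_coe_set_eq] at h8
            omega
          have habs := ih ⁅Q', (⊤ : Subgroup G)⁆ hcard''
            (Subgroup.commutator_normal _ _) (hQ''le.trans hle)
          exact hH.absorb habs
    exact hrec (Nat.card Q) Q le_rfl hQnormal le_rfl
  -- assemble: `Subgroup.normalizer (H : Set G) ⊓ D` contains a Sylow subgroup of `D` for each prime
  have hKcard : Nat.card D ∣ Nat.card (Subgroup.normalizer (H : Set G) ⊓ D : Subgroup G) := by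
    have hne1 : Nat.card (Subgroup.normalizer (H : Set G) ⊓ D : Subgroup G) ≠ 0 := Nat.card_pos.ne'
    have hne2 : Nat.card D ≠ 0 := Nat.card_pos.ne'
    rw [← Nat.factorization_le_iff_dvd hne2 hne1, Finsupp.le_def]
    intro r
    by_cases hr : r.Prime
    · haveI : Fact r.Prime := ⟨hr⟩
      obtain ⟨R⟩ := (inferInstance : Nonempty (Sylow r D))
      set R' : Subgroup G := Subgroup.map D.subtype (R : Subgroup D) with hR'def
      have hR'card : Nat.card R' = Nat.card (R : Subgroup D) :=
        (Nat.card_congr ((R : Subgroup D).equivMapOfInjective _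
          D.subtype_injective).toEquiv).symm
      have hR'D : R' ≤ D := Subgroup.map_subtype_le _
      obtain ⟨P, hP⟩ := (R.isPGroup'.map D.subtype).exists_le_sylow
      have hR'K : R' ≤ Subgroup.normalizer (H : Set G) ⊓ D :=
        le_inf ((le_inf hR'D hP).trans (main r hr P)) hR'D
      rw [← Nat.Prime.pow_dvd_iff_le_factorization hr hne1]
      calc r ^ (Nat.card D).factorization r = Nat.card (R : Subgroup D) :=
            R.card_eq_multiplicity.symm
        _ = Nat.card R' := hR'card.symm
        _ ∣ _ := Subgroup.card_dvd_of_le hR'K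
    · simp [Nat.factorization_eq_zero_of_not_prime _ hr]
  have hKD : Subgroup.normalizer (H : Set G) ⊓ D = D :=
    subgroup_eq_of_le_of_card_le inf_le_right
      (Nat.le_of_dvd Nat.card_pos hKcard)
  calc D = Subgroup.normalizer (H : Set G) ⊓ D := hKD.symm
    _ ≤ Subgroup.normalizer (H : Set G) := inf_le_left

end Main

theorem iInf_normalizer_hSubgroup_eq_iInf_normalizer_sylow
    (G : Type*) [Group G] [Finite G] :
    (⨅ (H : Subgroup G) (_ : IsHSubgroup H), Subgroup.normalizer (H : Set G)) =
      ⨅ (p : ℕ) (_ : p.Prime) (P : Sylow p G), Subgroup.normalizer ((P : Subgroup G) : Set G) := by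
  apply le_antisymm
  · refine le_iInf fun p => le_iInf fun hp => le_iInf fun P => ?_
    haveI : Fact p.Prime := ⟨hp⟩
    exact iInf_le_of_le (P : Subgroup G) (iInf_le_of_le (sylow_isHSubgroup P) le_rfl)
  · set D := ⨅ (p : ℕ) (_ : p.Prime) (P : Sylow p G), Subgroup.normalizer ((P : Subgroup G) : Set G) with hD
    have hmem : ∀ x : G, x ∈ D ↔ ∀ (p : ℕ), p.Prime → ∀ P : Sylow p G,
        x ∈ Subgroup.normalizer ((P : Subgroup G) : Set G) := by
      intro x
      simp [hD, Subgroup.mem_iInf]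
    have hDle : ∀ p : ℕ, p.Prime → ∀ P : Sylow p G, D ≤ Subgroup.normalizer ((P : Subgroup G) : Set G) :=
      fun p hp P x hx => (hmem x).mp hx p hp P
    have hDnorm : D.Normal := by
      constructor
      intro d hd g
      rw [hmem] at hd ⊢
      intro p hp P
      have hsm := hd p hp (g⁻¹ • P)
      rw [Subgroup.mem_normalizer_iff] at hsm ⊢
      intro h
      have h2 := hsm (g⁻¹ * h * g)
      rw [mem_smul_sylow, mem_smul_sylow] at h2
      have e1 : (g⁻¹)⁻¹ * (g⁻¹ * h * g) * g⁻¹ = h := by group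
      have e2 : (g⁻¹)⁻¹ * (d * (g⁻¹ * h * g) * d⁻¹) * g⁻¹
          = (g * d * g⁻¹) * h * (g * d * g⁻¹)⁻¹ := by group
      rw [e1, e2] at h2
      exact h2
    refine le_iInf fun H₀ => le_iInf fun hH₀ => ?_
    exact sylNorm_le_normalizer D H₀ hDle hDnorm hH₀.isWeaklyNormal
end

section
/- Let G be a finite group. Then the intersection of the normalizers of all weakly normal subgroups of G equals the intersection of the normalizers of all Sylow subgroups of G (equivalently, the hypercenter Z_∞(G)). That is, ⋂_{H weakly normal in G} N_G(H) = ⋂_{p prime, P ∈ Syl_p(G)} N_G(P). -/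
namespace WNProof
open Pointwise
open scoped commutatorElement
variable {G : Type*} [Group G]

lemma mem_conjSubgroup_iff {g x : G} {H : Subgroup G} :
    x ∈ conjSubgroup g H ↔ g * x * g⁻¹ ∈ H := by
  simp only [conjSubgroup, Subgroup.mem_map, MulEquiv.coe_toMonoidHom, MulAut.conj_apply, inv_inv]
  constructor
  · rintro ⟨h, hh, rfl⟩
    simpa [mul_assoc] using hh
  · intro hx
    exact ⟨g * x * g⁻¹, hx, by group⟩

lemma mem_normalizer_of {K : Subgroup G} {a : G} (h1 : ∀ k ∈ K, a * k * a⁻¹ ∈ K)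
    (h2 : ∀ k ∈ K, a⁻¹ * k * a ∈ K) : a ∈ Subgroup.normalizer (K : Set G) :=
  Subgroup.mem_normalizer_iff.mpr fun y =>
    ⟨fun hy => h1 y hy, fun hy => by simpa [mul_assoc] using h2 _ hy⟩

lemma sylow_weaklyNormal [Finite G] {p : ℕ} (hp : p.Prime) (P : Sylow p G) :
    IsWeaklyNormal (P : Subgroup G) := by
  haveI := Fact.mk hp
  intro g hgle
  set Q : Sylow p G := g⁻¹ • P with hQ
  have hQP : (Q : Subgroup G) = conjSubgroup g (P : Subgroup G) := rfl
  rw [← hQP] at hgle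
  have hinf : (Q : Subgroup G) ⊓ Subgroup.normalizer ((P : Subgroup G) : Set G) = (Q : Subgroup G) ⊓ P :=
    Q.isPGroup'.inf_normalizer_sylow P
  have hQle : (Q : Subgroup G) ≤ (P : Subgroup G) := by
    intro x hx
    have : x ∈ (Q : Subgroup G) ⊓ Subgroup.normalizer ((P : Subgroup G) : Set G) := ⟨hx, hgle hx⟩
    rw [hinf] at this
    exact this.2
  have hPQ : (P : Subgroup G) = (Q : Subgroup G) := Q.3 P.isPGroup' hQle
  have h8 : g⁻¹ • P = P := Sylow.ext hPQ.symm
  have h9 := Sylow.smul_eq_iff_mem_normalizer.mp h8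
  simpa using h9

lemma pElement_mem_normalizer [Finite G] {H : Subgroup G} (hH : IsWeaklyNormal H)
    {p : ℕ} (hp : p.Prime) {g : G} {k : ℕ} (hord : orderOf g = p ^ k)
    (hg : ∀ q : ℕ, q.Prime → ∀ Q : Sylow q G, g ∈ Subgroup.normalizer ((Q : Subgroup G) : Set G)) :
    g ∈ Subgroup.normalizer (H : Set G) := by
  haveI := Fact.mk hp
  -- conjugates of g normalize every Sylow subgroup
  have hconj : ∀ x : G, ∀ q : ℕ, q.Prime → ∀ Q : Sylow q G,
      x * g * x⁻¹ ∈ Subgroup.normalizer ((Q : Subgroup G) : Set G) := by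
    intro x q hq Q
    have h1 := hg q hq (x⁻¹ • Q)
    replace h1 := (Sylow.smul_eq_iff_mem_normalizer (P := x⁻¹ • Q)).mpr h1
    refine (Sylow.smul_eq_iff_mem_normalizer (P := Q)).mp ?_
    calc (x * g * x⁻¹) • Q = x • g • x⁻¹ • Q := by rw [mul_smul, mul_smul]
      _ = x • x⁻¹ • Q := by rw [h1]
      _ = Q := smul_inv_smul x Q
  have horder_conj : ∀ x : G, orderOf (x * g * x⁻¹) = p ^ k := by
    intro x
    rw [← hord]
    have hsc : SemiconjBy x g (x * g * x⁻¹) := by unfold SemiconjBy; group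
    exact (hsc.orderOf_eq x).symm
  -- conjugates of g lie in every Sylow p-subgroup
  have hconjP : ∀ x : G, ∀ P : Sylow p G, x * g * x⁻¹ ∈ (P : Subgroup G) := by
    intro x P
    have hpg : IsPGroup p (Subgroup.zpowers (x * g * x⁻¹)) :=
      IsPGroup.of_card (by rw [Nat.card_zpowers, horder_conj])
    have h1 : x * g * x⁻¹ ∈ Subgroup.zpowers (x * g * x⁻¹) ⊓ Subgroup.normalizer ((P : Subgroup G) : Set G) :=
      ⟨Subgroup.mem_zpowers _, hconj x p hp P⟩
    rw [show Subgroup.zpowers (x * g * x⁻¹) ⊓ Subgroup.normalizer ((P : Subgroup G) : Set G) = _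
      from hpg.inf_normalizer_sylow P] at h1
    exact h1.2
  set A : Subgroup G := Subgroup.normalClosure {g} with hA
  have hAnormal : A.Normal := Subgroup.normalClosure_normal
  have hconjset : ∀ (K : Subgroup G), (∀ x : G, x * g * x⁻¹ ∈ K) → A ≤ K := by
    intro K hK
    rw [hA, Subgroup.normalClosure, Subgroup.closure_le]
    rintro x hx
    rw [Group.mem_conjugatesOfSet_iff] at hx
    obtain ⟨a, ha, hc⟩ := hx
    rw [Set.mem_singleton_iff] at ha
    subst ha
    obtain ⟨c, rfl⟩ := isConj_iff.mp hc
    exact hK c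
  have hAleP : ∀ P : Sylow p G, A ≤ (P : Subgroup G) := fun P => hconjset _ (fun x => hconjP x P)
  have hAleN : ∀ q : ℕ, q.Prime → ∀ Q : Sylow q G, A ≤ Subgroup.normalizer ((Q : Subgroup G) : Set G) :=
    fun q hq Q => hconjset _ (fun x => hconj x q hq Q)
  obtain ⟨P⟩ : Nonempty (Sylow p G) := inferInstance
  have hApgroup : IsPGroup p A := P.isPGroup'.to_le (hAleP P)
  set C : Subgroup G := Subgroup.centralizer (A : Set G) with hC
  have hCnormal : C.Normal := by
    constructor
    intro c hc x
    rw [hC, Subgroup.mem_centralizer_iff] at hc ⊢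
    intro a ha
    have ha' : x⁻¹ * a * x ∈ A := by
      simpa using hAnormal.conj_mem a ha x⁻¹
    have hcomm := hc _ ha'
    calc a * (x * c * x⁻¹) = x * ((x⁻¹ * a * x) * c) * x⁻¹ := by group
      _ = x * (c * (x⁻¹ * a * x)) * x⁻¹ := by rw [hcomm]
      _ = (x * c * x⁻¹) * a := by group
  have hQC : ∀ q : ℕ, q.Prime → q ≠ p → ∀ Q : Sylow q G, (Q : Subgroup G) ≤ C := by
    intro q hq hqp Q y hy
    haveI := Fact.mk hq
    rw [hC, Subgroup.mem_centralizer_iff]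
    intro a ha
    have hw1 : a * y * a⁻¹ * y⁻¹ ∈ A := by
      have h2 : y * a⁻¹ * y⁻¹ ∈ A := hAnormal.conj_mem a⁻¹ (A.inv_mem ha) y
      simpa [mul_assoc] using A.mul_mem ha h2
    have hw2 : a * y * a⁻¹ * y⁻¹ ∈ (Q : Subgroup G) := by
      have h3 : a * y * a⁻¹ ∈ (Q : Subgroup G) :=
        (Subgroup.mem_normalizer_iff.mp (hAleN q hq Q ha) y).mp hy
      exact Subgroup.mul_mem _ h3 (Subgroup.inv_mem _ hy)
    have hdisj : Disjoint A (Q : Subgroup G) :=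
      IsPGroup.disjoint_of_ne p q (Ne.symm hqp) A (Q : Subgroup G) hApgroup Q.isPGroup'
    have hw : a * y * a⁻¹ * y⁻¹ = 1 := by
      have h4 := hdisj.le_bot (Subgroup.mem_inf.mpr ⟨hw1, hw2⟩)
      simpa [Subgroup.mem_bot] using h4
    calc a * y = (a * y * a⁻¹ * y⁻¹) * (y * a) := by group
      _ = y * a := by rw [hw]; group
  -- G = P * C
  have hPCtop : (P : Subgroup G) ⊔ C = ⊤ := by
    rw [← Subgroup.index_eq_one]
    by_contra hne1
    obtain ⟨r, hr, hrdvd⟩ := Nat.exists_prime_and_dvd hne1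
    haveI := Fact.mk hr
    rcases eq_or_ne r p with rfl | hrp
    · exact P.not_dvd_index (hrdvd.trans (Subgroup.index_dvd_of_le le_sup_left))
    · obtain ⟨Q⟩ : Nonempty (Sylow r G) := inferInstance
      exact Q.not_dvd_index (hrdvd.trans ((Subgroup.index_dvd_of_le le_sup_right).trans
        (Subgroup.index_dvd_of_le (hQC r hr hrp Q))))
  have hcover : ∀ x : G, ∃ u ∈ (P : Subgroup G), ∃ c ∈ C, u * c = x := by
    intro x
    have hx : x ∈ ((P : Subgroup G) ⊔ C : Subgroup G) := hPCtop ▸ Subgroup.mem_top x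
    have hset : (((P : Subgroup G) ⊔ C : Subgroup G) : Set G)
        = ((P : Subgroup G) : Set G) * (C : Set G) := Subgroup.mul_normal _ _
    have : x ∈ (((P : Subgroup G) : Set G) * (C : Set G)) := by rw [← hset]; exact hx
    exact Set.mem_mul.mp this
  -- the descending series
  set Aser : ℕ → Subgroup G := fun n => Nat.rec A (fun _ ih => ⁅ih, ⊤⁆) n with hAser
  have hser0 : Aser 0 = A := rfl
  have hsersucc : ∀ i, Aser (i + 1) = ⁅Aser i, (⊤ : Subgroup G)⁆ := fun i => rfl
  have hnormal : ∀ i, (Aser i).Normal := by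
    intro i
    induction i with
    | zero => exact hAnormal
    | succ i ih =>
      haveI := ih
      rw [hsersucc]
      infer_instance
  have hle : ∀ i, Aser i ≤ A := by
    intro i
    induction i with
    | zero => exact le_rfl
    | succ i ih =>
      haveI := hnormal i
      rw [hsersucc]
      exact (Subgroup.commutator_le_left _ _).trans ih
  have hcomm_mem : ∀ i, ∀ a ∈ Aser i, ∀ x : G, ⁅a, x⁆ ∈ Aser (i + 1) := by
    intro i a ha x
    rw [hsersucc]
    exact Subgroup.commutator_mem_commutator ha (Subgroup.mem_top x)
  -- termination via nilpotency of P
  have hnilp : Group.IsNilpotent (↥(P : Subgroup G)) := P.isPGroup'.isNilpotent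
  obtain ⟨nn, hnn⟩ := nilpotent_iff_lowerCentralSeries.mp hnilp
  have hmaptop : Subgroup.map (P : Subgroup G).subtype (⊤ : Subgroup ↥(P : Subgroup G))
      = (P : Subgroup G) := by
    rw [← MonoidHom.range_eq_map, Subgroup.range_subtype]
  have hbound : ∀ i, Aser i ≤ Subgroup.map (P : Subgroup G).subtype
      (Subgroup.lowerCentralSeries (⊤ : Subgroup ↥(P : Subgroup G)) i) := by
    intro i
    induction i with
    | zero =>
      rw [Subgroup.lowerCentralSeries_zero, hmaptop]
      exact hAleP P
    | succ i ih =>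
      have hstep : ⁅Aser i, (⊤ : Subgroup G)⁆ ≤ ⁅Aser i, (P : Subgroup G)⁆ := by
        rw [Subgroup.commutator_le]
        intro a ha x _
        obtain ⟨u, hu, c, hc, rfl⟩ := hcover x
        have hac : Commute a c := Subgroup.mem_centralizer_iff.mp hc a (hle i ha)
        have hacinv : c * a⁻¹ * c⁻¹ = a⁻¹ := by
          have h5 := hac.inv_left.eq
          rw [← h5]
          group
        have heq : ⁅a, u * c⁆ = ⁅a, u⁆ := by
          calc ⁅a, u * c⁆ = a * u * (c * a⁻¹ * c⁻¹) * u⁻¹ := by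
                rw [commutatorElement_def]; group
            _ = a * u * a⁻¹ * u⁻¹ := by rw [hacinv]
            _ = ⁅a, u⁆ := by rw [commutatorElement_def]
        rw [heq]
        exact Subgroup.commutator_mem_commutator ha hu
      rw [hsersucc]
      refine hstep.trans ?_
      have hlcs : Subgroup.lowerCentralSeries (⊤ : Subgroup ↥(P : Subgroup G)) (i + 1)
          = ⁅Subgroup.lowerCentralSeries (⊤ : Subgroup ↥(P : Subgroup G)) i, (⊤ : Subgroup ↥(P : Subgroup G))⁆ := rfl
      rw [hlcs]
      refine le_trans (Subgroup.commutator_mono ih (le_of_eq hmaptop.symm)) ?_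
      exact le_of_eq (by rw [Subgroup.map_commutator])
  have hbot : Aser nn = ⊥ := by
    have h6 := hbound nn
    rw [hnn, Subgroup.map_bot] at h6
    exact le_bot_iff.mp h6
  -- the ascending chain argument
  have chain : ∀ d i, Aser (i + d) = ⊥ → H ⊔ Aser i ≤ Subgroup.normalizer (H : Set G) := by
    intro d
    induction d with
    | zero =>
      intro i h0
      rw [Nat.add_zero] at h0
      rw [h0, sup_bot_eq]
      exact Subgroup.le_normalizer
    | succ d ih =>
      intro i hbot'
      have hK : H ⊔ Aser (i + 1) ≤ Subgroup.normalizer (H : Set G) := by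
        refine ih (i + 1) ?_
        rw [show i + 1 + d = i + (d + 1) by omega]
        exact hbot'
      haveI := hnormal (i + 1)
      have hKset : ∀ y ∈ H ⊔ Aser (i + 1), ∃ h ∈ H, ∃ b ∈ Aser (i + 1), h * b = y := by
        intro y hy
        have hset : ((H ⊔ Aser (i + 1) : Subgroup G) : Set G)
            = (H : Set G) * (Aser (i + 1) : Set G) := Subgroup.mul_normal _ _
        have : y ∈ (H : Set G) * (Aser (i + 1) : Set G) := by rw [← hset]; exact hy
        exact Set.mem_mul.mp this
      have hHN : ∀ h₀ ∈ H, ∀ y ∈ H ⊔ Aser (i + 1), h₀ * y * h₀⁻¹ ∈ H ⊔ Aser (i + 1) := by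
        intro h₀ hh₀ y hy
        obtain ⟨h, hh, b, hb, rfl⟩ := hKset y hy
        have heq : h₀ * (h * b) * h₀⁻¹ = (h₀ * h * h₀⁻¹) * (h₀ * b * h₀⁻¹) := by group
        rw [heq]
        exact Subgroup.mul_mem _
          (Subgroup.mem_sup_left (H.mul_mem (H.mul_mem hh₀ hh) (H.inv_mem hh₀)))
          (Subgroup.mem_sup_right ((hnormal (i + 1)).conj_mem b hb h₀))
      have hAN : ∀ a₀ ∈ Aser i, ∀ y ∈ H ⊔ Aser (i + 1), a₀ * y * a₀⁻¹ ∈ H ⊔ Aser (i + 1) := by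
        intro a₀ ha₀ y hy
        obtain ⟨h, hh, b, hb, rfl⟩ := hKset y hy
        have key : a₀ * h * a₀⁻¹ ∈ H ⊔ Aser (i + 1) := by
          have h1 : ⁅a₀, h⁆ ∈ Aser (i + 1) := hcomm_mem i a₀ ha₀ h
          have heq : a₀ * h * a₀⁻¹ = ⁅a₀, h⁆ * h := by rw [commutatorElement_def]; group
          rw [heq]
          exact Subgroup.mul_mem _ (Subgroup.mem_sup_right h1) (Subgroup.mem_sup_left hh)
        have heq : a₀ * (h * b) * a₀⁻¹ = (a₀ * h * a₀⁻¹) * (a₀ * b * a₀⁻¹) := by group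
        rw [heq]
        exact Subgroup.mul_mem _ key
          (Subgroup.mem_sup_right ((hnormal (i + 1)).conj_mem b hb a₀))
      have hNK : H ⊔ Aser i ≤ Subgroup.normalizer ((H ⊔ Aser (i + 1) : Subgroup G) : Set G) := by
        refine sup_le (fun h₀ hh₀ => ?_) (fun a₀ ha₀ => ?_)
        · exact mem_normalizer_of (hHN h₀ hh₀)
            (fun y hy => by simpa using hHN h₀⁻¹ (H.inv_mem hh₀) y hy)
        · exact mem_normalizer_of (hAN a₀ ha₀)
            (fun y hy => by simpa using hAN a₀⁻¹ ((Aser i).inv_mem ha₀) y hy)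
      intro x hx
      apply hH x
      refine le_trans ?_ hK
      intro y hy
      rw [mem_conjSubgroup_iff] at hy
      have hxK : x⁻¹ ∈ Subgroup.normalizer ((H ⊔ Aser (i + 1) : Subgroup G) : Set G) := Subgroup.inv_mem _ (hNK hx)
      have h7 := (Subgroup.mem_normalizer_iff.mp hxK (x * y * x⁻¹)).mp
        (Subgroup.mem_sup_left hy)
      simpa [mul_assoc] using h7
  have hfinal := chain nn 0 (by rw [Nat.zero_add]; exact hbot)
  exact hfinal (Subgroup.mem_sup_right (Subgroup.subset_normalClosure (Set.mem_singleton g)))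

lemma mem_normalizer_of_le_order [Finite G] {H : Subgroup G} (hH : IsWeaklyNormal H) :
    ∀ n : ℕ, ∀ g : G, orderOf g ≤ n →
      (∀ q : ℕ, q.Prime → ∀ Q : Sylow q G, g ∈ Subgroup.normalizer ((Q : Subgroup G) : Set G)) →
      g ∈ Subgroup.normalizer (H : Set G) := by
  intro n
  induction n with
  | zero =>
    intro g hg _
    exact absurd (Nat.le_zero.mp hg) (orderOf_pos g).ne'
  | succ n ih =>
    intro g hg hsyl
    by_cases hpp : ∃ (p : ℕ) (k : ℕ), p.Prime ∧ orderOf g = p ^ k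
    · obtain ⟨p, k, hp, hord⟩ := hpp
      exact pElement_mem_normalizer hH hp hord hsyl
    · set N := orderOf g with hN
      have hN0 : N ≠ 0 := (orderOf_pos g).ne'
      have hN1 : N ≠ 1 := by
        intro h1
        exact hpp ⟨2, 0, Nat.prime_two, by rw [h1, pow_zero]⟩
      have h1N : 1 < N := lt_of_le_of_ne (Nat.one_le_iff_ne_zero.mpr hN0) (Ne.symm hN1)
      set p := N.minFac with hpdef
      have hp : p.Prime := Nat.minFac_prime hN1
      set k := N.factorization p with hk
      set pk := p ^ k with hpk
      have hpkdvd : pk ∣ N := Nat.ordProj_dvd N p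
      set m := N / pk with hm
      have hNmk : pk * m = N := Nat.mul_div_cancel' hpkdvd
      have hk0 : 0 < k := hp.factorization_pos_of_dvd hN0 (Nat.minFac_dvd N)
      have hpk1 : 1 < pk := Nat.one_lt_pow hk0.ne' hp.one_lt
      have hm1 : m ≠ 1 := by
        intro h1
        refine hpp ⟨p, k, hp, ?_⟩
        rw [← hpk, ← hNmk, h1, mul_one]
      have hm0 : m ≠ 0 := by
        intro h1
        rw [h1, mul_zero] at hNmk
        exact hN0 hNmk.symm
      have hmltN : m < N := Nat.div_lt_self (Nat.pos_of_ne_zero hN0) hpk1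
      have hpkltN : pk < N := by
        rw [← hNmk]
        exact lt_mul_of_one_lt_right (by omega)
          (lt_of_le_of_ne (Nat.one_le_iff_ne_zero.mpr hm0) (Ne.symm hm1))
      have hco : Nat.Coprime pk m := Nat.Coprime.pow_left _ (Nat.coprime_ordCompl hp hN0)
      set a := Nat.gcdA pk m with ha
      set b := Nat.gcdB pk m with hb
      have hbez : (1 : ℤ) = pk * a + m * b := by
        have h2 := Nat.gcd_eq_gcd_ab pk m
        have h3 : Nat.gcd pk m = 1 := hco
        rw [h3] at h2
        exact_mod_cast h2
      set g₁ := g ^ ((pk : ℤ) * a) with hg₁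
      set g₂ := g ^ ((m : ℤ) * b) with hg₂
      have hgg : g = g₁ * g₂ := by
        rw [hg₁, hg₂, ← zpow_add, ← hbez, zpow_one]
      have hg₁m : g₁ ^ m = 1 := by
        rw [hg₁, ← zpow_natCast (g ^ ((pk : ℤ) * a)) m, ← zpow_mul]
        have : (pk : ℤ) * a * m = (N : ℤ) * a := by
          rw [← hNmk]
          push_cast
          ring
        rw [this, zpow_mul, zpow_natCast, hN, pow_orderOf_eq_one, one_zpow]
      have hg₂pk : g₂ ^ pk = 1 := by
        rw [hg₂, ← zpow_natCast (g ^ ((m : ℤ) * b)) pk, ← zpow_mul]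
        have : (m : ℤ) * b * pk = (N : ℤ) * b := by
          rw [← hNmk]
          push_cast
          ring
        rw [this, zpow_mul, zpow_natCast, hN, pow_orderOf_eq_one, one_zpow]
      have ho1 : orderOf g₁ ∣ m := orderOf_dvd_of_pow_eq_one hg₁m
      have ho2 : orderOf g₂ ∣ pk := orderOf_dvd_of_pow_eq_one hg₂pk
      have hsyl1 : ∀ q : ℕ, q.Prime → ∀ Q : Sylow q G, g₁ ∈ Subgroup.normalizer ((Q : Subgroup G) : Set G) :=
        fun q hq Q => Subgroup.zpow_mem _ (hsyl q hq Q) _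
      have hsyl2 : ∀ q : ℕ, q.Prime → ∀ Q : Sylow q G, g₂ ∈ Subgroup.normalizer ((Q : Subgroup G) : Set G) :=
        fun q hq Q => Subgroup.zpow_mem _ (hsyl q hq Q) _
      have hr1 : g₁ ∈ Subgroup.normalizer (H : Set G) := by
        refine ih g₁ ?_ hsyl1
        have := Nat.le_of_dvd (Nat.pos_of_ne_zero hm0) ho1
        omega
      have hr2 : g₂ ∈ Subgroup.normalizer (H : Set G) := by
        refine ih g₂ ?_ hsyl2
        have := Nat.le_of_dvd (by omega) ho2
        omega
      rw [hgg]
      exact Subgroup.mul_mem _ hr1 hr2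

end WNProof

theorem iInf_normalizer_weaklyNormal_eq_iInf_normalizer_sylow
    (G : Type*) [Group G] [Finite G] :
    (⨅ (H : Subgroup G) (_ : IsWeaklyNormal H), Subgroup.normalizer (H : Set G)) =
      ⨅ (p : ℕ) (_ : p.Prime) (P : Sylow p G), Subgroup.normalizer ((P : Subgroup G) : Set G) := by
  apply le_antisymm
  · refine le_iInf fun p => le_iInf fun hp => le_iInf fun P => ?_
    exact iInf₂_le (P : Subgroup G) (WNProof.sylow_weaklyNormal hp P)
  · intro g hg
    simp only [Subgroup.mem_iInf] at hg ⊢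
    intro H hH
    exact WNProof.mem_normalizer_of_le_order hH (orderOf g) g le_rfl
      (fun q hq Q => hg q hq Q)
end

section
/- Let G be a finite group. Then the intersection of the normalizers of all subgroups of G satisfying the subnormalizer condition in G equals the intersection of the normalizers of all Sylow subgroups of G (equivalently, the hypercenter Z_∞(G)). That is, ⋂_{H satisfying the subnormalizer condition in G} N_G(H) = ⋂_{p prime, P ∈ Syl_p(G)} N_G(P). -/
open Subgroup Pointwise

section SylowNormalizers

variable {G : Type*} [Group G]


def sylD (G : Type*) [Group G] : Subgroup G :=
  ⨅ (p : ℕ) (_ : p.Prime) (P : Sylow p G), Subgroup.normalizer ((P : Subgroup G) : Set G)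


lemma mem_sylD {x : G} :
    x ∈ sylD G ↔ ∀ (p : ℕ), p.Prime → ∀ P : Sylow p G, x ∈ Subgroup.normalizer ((P : Subgroup G) : Set G) := by
  simp [sylD, Subgroup.mem_iInf]

lemma sylD_le_normalizer {p : ℕ} (hp : p.Prime) (P : Sylow p G) :
    sylD G ≤ Subgroup.normalizer ((P : Subgroup G) : Set G) :=
  (iInf_le _ p).trans ((iInf_le _ hp).trans (iInf_le _ P))

lemma mem_conj_smul {g x : G} {S : Subgroup G} :
    x ∈ MulAut.conj g • S ↔ g⁻¹ * x * g ∈ S := by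
  rw [Subgroup.mem_pointwise_smul_iff_inv_smul_mem]
  simp [MulAut.smul_def]


lemma mem_coe_smul_sylow {p : ℕ} {g x : G} {P : Sylow p G} :
    x ∈ ((g • P : Sylow p G) : Subgroup G) ↔ g⁻¹ * x * g ∈ (P : Subgroup G) := by
  rw [Sylow.coe_subgroup_smul]
  exact mem_conj_smul

lemma sylD_normal [Finite G] : (sylD G).Normal := by
  constructor
  intro x hx g
  rw [mem_sylD] at hx ⊢
  intro p hp P
  haveI : Fact p.Prime := ⟨hp⟩
  have hx' := hx p hp (g⁻¹ • P)
  refine mem_normalizer_fintype fun h hh => ?_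
  have h1 : g⁻¹ * h * g ∈ ((g⁻¹ • P : Sylow p G) : Subgroup G) := by
    rw [mem_coe_smul_sylow]
    simp [mul_assoc]
    exact hh
  have h2 : x * (g⁻¹ * h * g) * x⁻¹ ∈ ((g⁻¹ • P : Sylow p G) : Subgroup G) :=
    (mem_normalizer_iff.mp hx' _).mp h1
  rw [mem_coe_smul_sylow] at h2
  have : (g⁻¹)⁻¹ * (x * (g⁻¹ * h * g) * x⁻¹) * g⁻¹ = g * x * g⁻¹ * h * (g * x * g⁻¹)⁻¹ := by
    group
  rwa [this] at h2

/-- For `N ≤ sylD G`, the intersection `N ⊓ P` is a Sylow subgroup of `N`. -/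
noncomputable def infSylow [Finite G] {N : Subgroup G} (hND : N ≤ sylD G) {p : ℕ}
    (hp : p.Prime) (P : Sylow p G) : Sylow p ↥N where
  toSubgroup := (N ⊓ ↑P).subgroupOf N
  isPGroup' := (IsPGroup.to_inf_right P.isPGroup').comap_of_injective N.subtype
      N.subtype_injective
  is_maximal' := by
    intro Q' hQ' hle
    have h1 : IsPGroup p (Subgroup.map N.subtype Q') := hQ'.map _
    have h2 : Subgroup.map N.subtype Q' ≤ Subgroup.normalizer ((P : Subgroup G) : Set G) :=
      (Subgroup.map_subtype_le Q').trans (hND.trans (sylD_le_normalizer hp P))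
    have h3 : Subgroup.map N.subtype Q' ≤ ↑P := by
      have := IsPGroup.inf_normalizer_sylow h1 P
      exact le_trans (le_inf le_rfl h2) (this.le.trans inf_le_right)
    have h4 : Q' ≤ (N ⊓ ↑P).subgroupOf N := by
      rw [subgroupOf, ← map_le_iff_le_comap]
      exact le_inf (Subgroup.map_subtype_le Q') h3
    exact le_antisymm h4 hle

lemma infSylow_coe [Finite G] {N : Subgroup G} (hND : N ≤ sylD G) {p : ℕ}
    (hp : p.Prime) (P : Sylow p G) :
    (infSylow hND hp P : Subgroup ↥N) = (N ⊓ ↑P).subgroupOf N := rfl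

lemma inf_sylow_le [Finite G] {N : Subgroup G} (hND : N ≤ sylD G) {p : ℕ}
    (hp : p.Prime) (P Q : Sylow p G) : N ⊓ ↑Q ≤ N ⊓ ↑P := by
  haveI : Fact p.Prime := ⟨hp⟩
  obtain ⟨n, hn⟩ := MulAction.exists_smul_eq ↥N (infSylow hND hp P) (infSylow hND hp Q)
  have hc : (MulAut.conj n • ((N ⊓ ↑P).subgroupOf N) : Subgroup ↥N)
      = (N ⊓ ↑Q).subgroupOf N := by
    have := congrArg (fun (R : Sylow p ↥N) => (R : Subgroup ↥N)) hn
    simpa [Sylow.coe_subgroup_smul, infSylow_coe] using this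
  intro x hx
  have hxN : x ∈ N := hx.1
  have hmem : (⟨x, hxN⟩ : ↥N) ∈ (N ⊓ ↑Q).subgroupOf N := by
    rw [mem_subgroupOf]; exact hx
  rw [← hc, mem_conj_smul, mem_subgroupOf] at hmem
  -- hmem : ↑(n⁻¹ * ⟨x⟩ * n) ∈ N ⊓ ↑P
  have hnP : (n : G) ∈ Subgroup.normalizer ((P : Subgroup G) : Set G) := (hND.trans (sylD_le_normalizer hp P)) n.2
  have hx' : (n : G)⁻¹ * x * n ∈ (P : Subgroup G) := by
    exact (by simpa using hmem.2 : (n : G)⁻¹ * x * n ∈ P)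
  constructor
  · exact hxN
  · have := (mem_normalizer_iff.mp hnP ((n : G)⁻¹ * x * n)).mp hx'
    exact (by simpa [mul_assoc] using this : x ∈ (P : Subgroup G))

lemma inf_sylow_eq [Finite G] {N : Subgroup G} (hND : N ≤ sylD G) {p : ℕ}
    (hp : p.Prime) (P Q : Sylow p G) : N ⊓ ↑P = N ⊓ ↑Q :=
  le_antisymm (inf_sylow_le hND hp Q P) (inf_sylow_le hND hp P Q)

lemma inf_sylow_normal [Finite G] {N : Subgroup G} (hN : N.Normal) (hND : N ≤ sylD G)
    {p : ℕ} (hp : p.Prime) (P : Sylow p G) : (N ⊓ (P : Subgroup G)).Normal := by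
  haveI : Fact p.Prime := ⟨hp⟩
  constructor
  intro x hx g
  have h1 : x ∈ N ⊓ ↑(g⁻¹ • P) := (inf_sylow_eq hND hp P (g⁻¹ • P)).le hx
  have h2 : g * x * g⁻¹ ∈ (P : Subgroup G) := by
    have := mem_coe_smul_sylow.mp h1.2
    simpa using this
  exact ⟨hN.conj_mem x hx.1 g, h2⟩



lemma sylow_subnormalizerCondition [Finite G] {p : ℕ} (hp : p.Prime) (P : Sylow p G) :
    SubnormalizerCondition (P : Subgroup G) := by
  haveI : Fact p.Prime := ⟨hp⟩
  intro K hPK hnorm g hg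
  have hgP : ↑(g • P) ≤ K := by
    intro y hy
    rw [Sylow.coe_subgroup_smul, mem_conj_smul] at hy
    have := (mem_normalizer_iff.mp hg (g⁻¹ * y * g)).mp (hPK hy)
    simpa [mul_assoc] using this
  haveI hQ1n : ((P.subtype hPK : Subgroup ↥K)).Normal := by
    rw [Sylow.coe_subtype]; exact hnorm
  haveI := Sylow.unique_of_normal (P.subtype hPK) hQ1n
  have : (g • P).subtype hgP = P.subtype hPK := Subsingleton.elim _ _
  have hsmul : g • P = P := Sylow.subtype_injective this
  exact Sylow.smul_eq_iff_mem_normalizer.mp hsmul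

lemma subnormalizerCondition_ucs_le [Finite G] {H : Subgroup G}
    (hH : SubnormalizerCondition H) (n : ℕ) : Subgroup.upperCentralSeries G n ≤ Subgroup.normalizer (H : Set G) := by
  have key : ∀ n, H ⊔ Subgroup.upperCentralSeries G n ≤ Subgroup.normalizer (H : Set G) := by
    intro n
    induction n with
    | zero => simpa using le_normalizer
    | succ n ih =>
      set K := H ⊔ Subgroup.upperCentralSeries G n with hK
      have hHK : H ≤ K := le_sup_left
      have hnorm : (H.subgroupOf K).Normal := by
        rw [normal_subgroupOf_iff hHK]
        intro h k hh hk
        exact (mem_normalizer_iff.mp (ih hk) h).mp hh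
      have hNK : Subgroup.normalizer (K : Set G) ≤ Subgroup.normalizer (H : Set G) := hH K hHK hnorm
      refine sup_le le_normalizer ?_
      intro z hz
      refine hNK (mem_normalizer_fintype fun k hk => ?_)
      have h1 : z * k * z⁻¹ * k⁻¹ ∈ Subgroup.upperCentralSeries G n :=
        Subgroup.mem_upperCentralSeries_succ_iff.mp hz k
      have h2 : z * k * z⁻¹ = (z * k * z⁻¹ * k⁻¹) * k := by group
      rw [h2]
      exact K.mul_mem ((le_sup_right : Subgroup.upperCentralSeries G n ≤ K) h1) hk
  exact fun x hx => key n ((le_sup_right : Subgroup.upperCentralSeries G n ≤ H ⊔ _) hx)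





lemma eq_top_of_sylows_le [Finite G] {T : Subgroup G}
    (h : ∀ q : ℕ, q.Prime → ∃ Q : Sylow q G, (Q : Subgroup G) ≤ T) : T = ⊤ := by
  have hGpos : Nat.card G ≠ 0 := Nat.card_pos.ne'
  have hTpos : Nat.card T ≠ 0 := Nat.card_pos.ne'
  have hdvd : Nat.card G ∣ Nat.card T := by
    rw [← Nat.factorization_le_iff_dvd hGpos hTpos]
    intro q
    by_cases hq : q.Prime
    · haveI : Fact q.Prime := ⟨hq⟩
      obtain ⟨Q, hQ⟩ := h q hq
      have h1 : q ^ (Nat.card G).factorization q ∣ Nat.card T := by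
        rw [← Sylow.card_eq_multiplicity Q]
        exact card_dvd_of_le hQ
      exact (Nat.Prime.pow_dvd_iff_le_factorization hq hTpos).mp h1
    · simp [Nat.factorization_eq_zero_of_not_prime _ hq]
  exact Subgroup.eq_top_of_card_eq _
    (Nat.dvd_antisymm (Subgroup.card_subgroup_dvd_card T) hdvd)

lemma minimal_le_center [Finite G] {N : Subgroup G} (hN : N.Normal) (hND : N ≤ sylD G)
    (hbot : N ≠ ⊥) {p : ℕ} (hp : p.Prime) (hNp : IsPGroup p ↥N)
    (hmin : ∀ K : Subgroup G, K ≠ ⊥ → K.Normal → K ≤ N → K = N) :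
    N ≤ center G := by
  haveI : Fact p.Prime := ⟨hp⟩
  haveI := hN
  obtain ⟨P, hNP⟩ := hNp.exists_le_sylow
  -- Sylow subgroups for other primes centralize N
  have hqcent : ∀ (q : ℕ), q.Prime → q ≠ p → ∀ Q : Sylow q G,
      (Q : Subgroup G) ≤ centralizer (N : Set G) := by
    intro q hq hqp Q y hy
    haveI : Fact q.Prime := ⟨hq⟩
    rw [mem_centralizer_iff]
    intro x hx
    have hw1 : y * x * y⁻¹ * x⁻¹ ∈ N := N.mul_mem (hN.conj_mem x hx y) (N.inv_mem hx)
    have hxQ : x ∈ Subgroup.normalizer ((Q : Subgroup G) : Set G) := (hND.trans (sylD_le_normalizer hq Q)) hx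
    have hw2 : y * x * y⁻¹ * x⁻¹ ∈ (Q : Subgroup G) := by
      have h1 : x * y⁻¹ * x⁻¹ ∈ (Q : Subgroup G) :=
        (mem_normalizer_iff.mp hxQ y⁻¹).mp ((Q : Subgroup G).inv_mem hy)
      have h2 : y * x * y⁻¹ * x⁻¹ = y * (x * y⁻¹ * x⁻¹) := by group
      rw [h2]
      exact (Q : Subgroup G).mul_mem hy h1
    have hdisj : Disjoint (Q : Subgroup G) N :=
      IsPGroup.disjoint_of_ne q p hqp (H₁ := (Q : Subgroup G)) (H₂ := N) Q.isPGroup' hNp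
    have hw : y * x * y⁻¹ * x⁻¹ = 1 := by
      have hmem : y * x * y⁻¹ * x⁻¹ ∈ (Q : Subgroup G) ⊓ N := ⟨hw2, hw1⟩
      have := hdisj.le_bot hmem
      simpa [Subgroup.mem_bot] using this
    have h5 : (y * x) * (x * y)⁻¹ = y * x * y⁻¹ * x⁻¹ := by group
    have h6 : (y * x) * (x * y)⁻¹ = 1 := by rw [h5, hw]
    exact (mul_inv_eq_one.mp h6).symm
  -- `C = N ⊓ centralizer P` is a nontrivial normal subgroup contained in `N`
  set C : Subgroup G := N ⊓ centralizer ((P : Subgroup G) : Set G) with hC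
  -- fixed point: C is nontrivial
  letI : MulAction ↥(P : Subgroup G) ↥N :=
    MulAction.compHom ↥N ((MulAut.conjNormal (H := N)).comp (P : Subgroup G).subtype)
  have hsmul : ∀ (g : ↥(P : Subgroup G)) (x : ↥N), ((g • x : ↥N) : G) = g * x * (g : G)⁻¹ :=
    fun g x => rfl
  have h1fix : (1 : ↥N) ∈ MulAction.fixedPoints ↥(P : Subgroup G) ↥N := by
    intro g
    ext
    rw [hsmul]
    simp
  haveI : Nontrivial ↥N := (nontrivial_iff_ne_bot N).mpr hbot
  have hpdvd : p ∣ Nat.card ↥N := by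
    obtain ⟨k, hk0, hkcard⟩ := (IsPGroup.nontrivial_iff_card hNp).mp inferInstance
    rw [hkcard]
    exact dvd_pow_self p hk0.ne'
  obtain ⟨b, hbfix, hb1⟩ :=
    P.isPGroup'.exists_fixed_point_of_prime_dvd_card_of_fixed_point ↥N hpdvd h1fix
  have hbC : (b : G) ∈ C := by
    rw [hC, Subgroup.mem_inf]
    refine ⟨b.2, ?_⟩
    rw [mem_centralizer_iff]
    intro h hh
    have := congrArg (Subtype.val) (hbfix ⟨h, hh⟩)
    rw [hsmul] at this
    -- this : h * b * h⁻¹ = b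
    have h7 : h * (b : G) = (h * b * h⁻¹) * h := by group
    rw [h7, this]
  have hCbot : C ≠ ⊥ := by
    intro hbotC
    apply hb1
    have : (b : G) = 1 := by
      have := hbotC ▸ hbC
      simpa [Subgroup.mem_bot] using this
    ext
    simp [this]
  have hCnormal : C.Normal := by
    rw [← normalizer_eq_top_iff]
    apply eq_top_of_sylows_le
    intro q hq
    by_cases hqp : q = p
    · subst hqp
      refine ⟨P, ?_⟩
      intro y hy
      refine mem_normalizer_fintype fun c hc => ?_
      have hcC : c ∈ C := hc
      obtain ⟨hc1, hc2⟩ := Subgroup.mem_inf.mp (hC ▸ hcC)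
      show y * c * y⁻¹ ∈ C
      rw [hC, Subgroup.mem_inf]
      refine ⟨hN.conj_mem c hc1 y, ?_⟩
      rw [mem_centralizer_iff]
      intro h hh
      have hcomm := mem_centralizer_iff.mp hc2
      have h8 := hcomm (y⁻¹ * h * y)
        (mul_mem (mul_mem ((P : Subgroup G).inv_mem hy) hh) hy)
      calc h * (y * c * y⁻¹) = y * ((y⁻¹ * h * y) * c) * y⁻¹ := by group
        _ = y * (c * (y⁻¹ * h * y)) * y⁻¹ := by rw [h8]
        _ = (y * c * y⁻¹) * h := by group
    · obtain ⟨Q⟩ := (inferInstance : Nonempty (Sylow q G))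
      refine ⟨Q, ?_⟩
      intro y hy
      refine mem_normalizer_fintype fun c hc => ?_
      have hcC : c ∈ C := hc
      obtain ⟨hc1, hc2⟩ := Subgroup.mem_inf.mp (hC ▸ hcC)
      have h9 : y * c = c * y := (mem_centralizer_iff.mp (hqcent q hq hqp Q hy) c hc1).symm
      have h10 : y * c * y⁻¹ = c := by rw [h9]; group
      rw [h10]
      exact hc
  have hCN : C = N := hmin C hCbot hCnormal inf_le_left
  have hNcent : N ≤ centralizer ((P : Subgroup G) : Set G) := hCN ▸ inf_le_right
  -- centralizer of N is everything
  have hcentN : centralizer (N : Set G) = ⊤ := by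
    apply eq_top_of_sylows_le
    intro q hq
    by_cases hqp : q = p
    · subst hqp
      refine ⟨P, ?_⟩
      intro y hy
      rw [mem_centralizer_iff]
      intro x hx
      exact (mem_centralizer_iff.mp (hNcent hx) y hy).symm
    · obtain ⟨Q⟩ := (inferInstance : Nonempty (Sylow q G))
      exact ⟨Q, hqcent q hq hqp Q⟩
  intro x hx
  rw [mem_center_iff]
  intro g
  exact (mem_centralizer_iff.mp (hcentN ▸ (mem_top g) : g ∈ centralizer (N : Set G)) x hx).symm




lemma comap_ucs_le {N : Subgroup G} [hNn : N.Normal] (hNc : N ≤ center G) (n : ℕ) :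
    comap (QuotientGroup.mk' N) (Subgroup.upperCentralSeries (G ⧸ N) n) ≤ Subgroup.upperCentralSeries G (n + 1) := by
  induction n with
  | zero =>
    intro x hx
    rw [mem_comap, Subgroup.upperCentralSeries_zero, Subgroup.mem_bot] at hx
    have hxN : x ∈ N := by rwa [← QuotientGroup.ker_mk' N, MonoidHom.mem_ker]
    rw [Subgroup.upperCentralSeries_one]
    exact hNc hxN
  | succ n ih =>
    intro x hx
    rw [mem_comap] at hx
    rw [Subgroup.mem_upperCentralSeries_succ_iff]
    intro y
    apply ih
    rw [mem_comap]
    have := Subgroup.mem_upperCentralSeries_succ_iff.mp hx (QuotientGroup.mk' N y)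
    simpa using this

lemma mk_mem_sylD [Finite G] {N : Subgroup G} [hNn : N.Normal] {x : G} (hx : x ∈ sylD G) :
    QuotientGroup.mk' N x ∈ sylD (G ⧸ N) := by
  rw [mem_sylD] at hx ⊢
  intro p hp P'
  haveI : Fact p.Prime := ⟨hp⟩
  obtain ⟨P, rfl⟩ := Sylow.mapSurjective_surjective (QuotientGroup.mk'_surjective N) p P'
  refine mem_normalizer_fintype fun y hy => ?_
  have hy' : y ∈ Subgroup.map (QuotientGroup.mk' N) ↑P := by
    rwa [← Sylow.coe_mapSurjective (QuotientGroup.mk'_surjective N)]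
  rw [Subgroup.mem_map] at hy'
  obtain ⟨h, hh, rfl⟩ := hy'
  show _ ∈ ((Sylow.mapSurjective (QuotientGroup.mk'_surjective N) P : Sylow p (G ⧸ N)) :
    Subgroup (G ⧸ N))
  rw [Sylow.coe_mapSurjective, Subgroup.mem_map]
  exact ⟨x * h * x⁻¹, (mem_normalizer_iff.mp (hx p hp P) h).mp hh, by simp⟩

universe u

lemma baer_aux : ∀ (n : ℕ) (G : Type u) [Group G] [Finite G], Nat.card G ≤ n →
    ∀ x ∈ sylD G, ∃ m, x ∈ Subgroup.upperCentralSeries G m := by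
  intro n
  induction n with
  | zero =>
    intro G _ _ hc
    have : 0 < Nat.card G := Nat.card_pos
    omega
  | succ n ih =>
    intro G _ _ hcard x hx
    by_cases hD : sylD G = ⊥
    · rw [hD, Subgroup.mem_bot] at hx
      exact ⟨0, by simp [hx, Subgroup.one_mem]⟩
    · set S : Set (Subgroup G) := {K | K ≠ ⊥ ∧ K.Normal ∧ K ≤ sylD G} with hS
      have hDS : sylD G ∈ S := ⟨hD, sylD_normal, le_rfl⟩
      have hne : {m | ∃ K ∈ S, Nat.card K = m}.Nonempty := ⟨_, _, hDS, rfl⟩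
      obtain ⟨N, hNS, hNcard⟩ := Nat.sInf_mem hne
      obtain ⟨hNbot, hNnormal, hND⟩ := hNS
      have hmin : ∀ K : Subgroup G, K ≠ ⊥ → K.Normal → K ≤ N → K = N := by
        intro K h1 h2 h3
        have hK : Nat.card N ≤ Nat.card K := by
          rw [hNcard]
          exact Nat.sInf_le ⟨K, ⟨h1, h2, h3.trans hND⟩, rfl⟩
        exact eq_of_le_of_card_ge h3 hK
      -- find an element of prime order in N
      haveI : Nontrivial ↥N := (nontrivial_iff_ne_bot N).mpr hNbot
      obtain ⟨y, hy1⟩ := exists_ne (1 : ↥N)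
      have hyG : (y : G) ≠ 1 := by
        intro h
        exact hy1 (Subtype.ext (by simpa using h))
      have horder : orderOf (y : G) ≠ 1 := by
        simpa [orderOf_eq_one_iff] using hyG
      set p := (orderOf (y : G)).minFac with hpdef
      have hp : p.Prime := Nat.minFac_prime horder
      haveI : Fact p.Prime := ⟨hp⟩
      set z := (y : G) ^ (orderOf (y : G) / p) with hz
      have hordz : orderOf z = p := by
        apply orderOf_pow_orderOf_div
        · exact (orderOf_pos _).ne'
        · exact Nat.minFac_dvd _
      have hz1 : z ≠ 1 := by
        intro h
        rw [h, orderOf_one] at hordz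
        exact hp.one_lt.ne' hordz.symm
      have hzN : z ∈ N := N.pow_mem y.2 _
      have hzP : IsPGroup p (zpowers z) := by
        apply IsPGroup.of_card (n := 1)
        rw [Nat.card_zpowers, hordz, pow_one]
      obtain ⟨P₀, hP₀⟩ := hzP.exists_le_sylow
      have hMbot : N ⊓ ↑P₀ ≠ ⊥ := by
        intro h
        have : z ∈ N ⊓ ↑P₀ := ⟨hzN, hP₀ (mem_zpowers z)⟩
        rw [h, Subgroup.mem_bot] at this
        exact hz1 this
      have hM : N ⊓ ↑P₀ = N := hmin _ hMbot (inf_sylow_normal hNnormal hND hp P₀) inf_le_left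
      have hNp : IsPGroup p ↥N := by
        rw [← hM]
        exact IsPGroup.to_inf_right P₀.isPGroup'
      haveI := hNnormal
      have hcenter : N ≤ center G := minimal_le_center hNnormal hND hNbot hp hNp hmin
      have hqcard : Nat.card (G ⧸ N) ≤ n := by
        have h1 : Nat.card G = Nat.card (G ⧸ N) * Nat.card N :=
          card_eq_card_quotient_mul_card_subgroup N
        have h2 : 1 < Nat.card N := Finite.one_lt_card
        have h3 : 0 < Nat.card (G ⧸ N) := Nat.card_pos
        have h4 : Nat.card (G ⧸ N) < Nat.card G := by
          rw [h1]
          exact (Nat.lt_mul_iff_one_lt_right h3).mpr h2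
        omega
      obtain ⟨m, hm⟩ := ih (G ⧸ N) hqcard _ (mk_mem_sylD hx)
      refine ⟨m + 1, comap_ucs_le hcenter m ?_⟩
      rwa [mem_comap]


end SylowNormalizers

theorem iInf_normalizer_subnormalizerCondition_eq_iInf_normalizer_sylow
    (G : Type*) [Group G] [Finite G] :
    (⨅ (H : Subgroup G) (_ : SubnormalizerCondition H), Subgroup.normalizer (H : Set G)) =
      ⨅ (p : ℕ) (_ : p.Prime) (P : Sylow p G), Subgroup.normalizer ((P : Subgroup G) : Set G) := by
  apply le_antisymm
  · refine le_iInf fun p => le_iInf fun hp => le_iInf fun P => ?_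
    exact iInf_le_of_le (P : Subgroup G)
      (iInf_le_of_le (sylow_subnormalizerCondition hp P) le_rfl)
  · refine le_iInf fun H => le_iInf fun hH => ?_
    intro x hx
    obtain ⟨m, hm⟩ := baer_aux (Nat.card G) G le_rfl x hx
    exact subnormalizerCondition_ucs_le hH m hm
end

section
/- Let G be a finite group and p a prime. Then the intersection of the normalizers of all p-subgroups of G that satisfy the subnormalizer condition in G equals the intersection of the normalizers of all Sylow p-subgroups of G. That is, ⋂_{H a p-subgroup of G satisfying the subnormalizer condition in G} N_G(H) = ⋂_{P ∈ Syl_p(G)} N_G(P). -/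
private lemma aux_normal_subgroupOf {G : Type*} [Group G] {H K : Subgroup G}
    (h : K ≤ Subgroup.normalizer (H : Set G)) : (H.subgroupOf K).Normal := by
  constructor
  intro n hn g
  have hg : (g : G) ∈ Subgroup.normalizer (H : Set G) := h g.2
  rw [Subgroup.mem_subgroupOf] at hn ⊢
  simpa using (Subgroup.mem_normalizer_iff.mp hg n).mp hn

private lemma aux_sylow_sc {G : Type*} [Group G] [Finite G] {p : ℕ} [Fact p.Prime]
    (P : Sylow p G) : SubnormalizerCondition (P : Subgroup G) := by
  intro K hPK hN g hg
  change g ∈ Subgroup.normalizer (P : Set G)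
  rw [← Sylow.smul_eq_iff_mem_normalizer]
  have hgK : ∀ x ∈ (P : Subgroup G), g * x * g⁻¹ ∈ K := fun x hx =>
    (Subgroup.mem_normalizer_iff.mp hg x).mp (hPK hx)
  have hQK : ((g • P : Sylow p G) : Subgroup G) ≤ K := by
    intro y hy
    have h1 : (MulAut.conj g)⁻¹ • y ∈ (P : Subgroup G) :=
      Subgroup.mem_pointwise_smul_iff_inv_smul_mem.mp hy
    have h2 : g⁻¹ * y * g ∈ (P : Subgroup G) := by simpa [MulAut.smul_def] using h1
    simpa [mul_assoc] using hgK _ h2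
  haveI hnormal : (P.subtype hPK).Normal := by
    rw [Sylow.coe_subtype]; exact hN
  obtain ⟨k, hk⟩ := MulAction.exists_smul_eq K (P.subtype hPK) ((g • P).subtype hQK)
  rw [Sylow.smul_eq_of_normal] at hk
  exact (Sylow.subtype_injective hk).symm

theorem iInf_normalizer_p_subnormalizerCondition_eq_iInf_normalizer_sylow_p
    (G : Type*) [Group G] [Finite G] (p : ℕ) (hp : p.Prime) :
    (⨅ (H : Subgroup G) (_ : IsPGroup p H ∧ SubnormalizerCondition H), Subgroup.normalizer (H : Set G)) =
      ⨅ P : Sylow p G, Subgroup.normalizer ((P : Subgroup G) : Set G) := by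
  haveI : Fact p.Prime := ⟨hp⟩
  apply le_antisymm
  · exact le_iInf fun P =>
      iInf_le_of_le (P : Subgroup G) (iInf_le_of_le ⟨P.2, aux_sylow_sc P⟩ le_rfl)
  · refine le_iInf fun H => le_iInf fun hH => ?_
    obtain ⟨hHp, hSC⟩ := hH
    set D := ⨅ P : Sylow p G, Subgroup.normalizer ((P : Subgroup G) : Set G) with hDdef
    have hDle : ∀ P : Sylow p G, D ≤ Subgroup.normalizer ((P : Subgroup G) : Set G) := fun P => iInf_le _ _
    have hDnormal : D.Normal := by
      constructor
      intro d hd g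
      have hd' : ∀ P : Sylow p G, d ∈ Subgroup.normalizer ((P : Subgroup G) : Set G) := fun P => hDle P hd
      have : ∀ P : Sylow p G, g * d * g⁻¹ ∈ Subgroup.normalizer ((P : Subgroup G) : Set G) := by
        intro P
        have h1 := hd' (g⁻¹ • P)
        rw [Subgroup.mem_normalizer_iff] at h1 ⊢
        intro y
        have hmem : ∀ x : G, x ∈ ((g⁻¹ • P : Sylow p G) : Subgroup G) ↔
            g * x * g⁻¹ ∈ (P : Subgroup G) := by
          intro x
          rw [Sylow.coe_subgroup_smul]
          rw [Subgroup.mem_pointwise_smul_iff_inv_smul_mem]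
          constructor
          · intro h; simpa [MulAut.smul_def, mul_assoc] using h
          · intro h; simpa [MulAut.smul_def, mul_assoc] using h
        have h2 := h1 (g⁻¹ * y * g)
        rw [hmem, hmem] at h2
        constructor
        · intro hy
          have := h2.mp (by simpa [mul_assoc] using hy)
          simpa [mul_assoc] using this
        · intro hy
          have := h2.mpr (by simpa [mul_assoc] using hy)
          simpa [mul_assoc] using this
      rw [hDdef, Subgroup.mem_iInf]
      exact this
    obtain ⟨P, hHP⟩ := hHp.exists_le_sylow
    set O : Subgroup G := D ⊓ (P : Subgroup G) with hOdef
    set S : Subgroup G := H ⊔ O with hSdef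
    have hSP : S ≤ (P : Subgroup G) := sup_le hHP inf_le_right
    have hSpgroup : IsPGroup p S := P.2.to_le hSP
    have hDP : ∀ d ∈ D, ∀ x ∈ (P : Subgroup G), d * x * d⁻¹ ∈ (P : Subgroup G) :=
      fun d hd x hx => (Subgroup.mem_normalizer_iff.mp (hDle P hd) x).mp hx
    have key : ∀ d ∈ D, ∀ s ∈ S, d * s * d⁻¹ ∈ S := by
      intro d hd
      have hmap : S.map (MulAut.conj d).toMonoidHom ≤ S := by
        rw [hSdef, Subgroup.map_sup]
        apply sup_le
        · rintro _ ⟨h, hh, rfl⟩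
          have hhS : h ∈ S := le_sup_left (a := H) (b := O) hh
          have hu1 : h⁻¹ * d * h * d⁻¹ ∈ D :=
            D.mul_mem (by simpa using hDnormal.conj_mem d hd h⁻¹) (D.inv_mem hd)
          have hu2 : h⁻¹ * d * h * d⁻¹ ∈ (P : Subgroup G) := by
            have := (P : Subgroup G).mul_mem ((P : Subgroup G).inv_mem (hHP hh))
              (hDP d hd h (hHP hh))
            simpa [mul_assoc] using this
          have huO : h⁻¹ * d * h * d⁻¹ ∈ O := ⟨hu1, hu2⟩
          have : h * (h⁻¹ * d * h * d⁻¹) ∈ S :=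
            S.mul_mem hhS (le_sup_right (a := H) (b := O) huO)
          simpa [MulAut.conj_apply, mul_assoc] using this
        · rintro _ ⟨x, hx, rfl⟩
          have : d * x * d⁻¹ ∈ O := ⟨hDnormal.conj_mem x hx.1 d, hDP d hd x hx.2⟩
          simpa [MulAut.conj_apply] using le_sup_right (a := H) (b := O) this
      intro s hs
      exact hmap ⟨s, hs, rfl⟩
    have hDS : D ≤ Subgroup.normalizer (S : Set G) := by
      intro d hd
      rw [Subgroup.mem_normalizer_iff]
      intro s
      constructor
      · exact fun hs => key d hd s hs
      · intro hs
        have := key d⁻¹ (D.inv_mem hd) _ hs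
        simpa [mul_assoc] using this
    set K : Subgroup G := Subgroup.normalizer (H : Set G) ⊓ S with hKdef
    have hHK : H ≤ K := le_inf Subgroup.le_normalizer le_sup_left
    have hKN : Subgroup.normalizer (K : Set G) ≤ Subgroup.normalizer (H : Set G) :=
      hSC K hHK (aux_normal_subgroupOf inf_le_left)
    have hSK : S ≤ K := by
      by_contra hcon
      have hKS : K ≤ S := inf_le_right
      have hlt : K.subgroupOf S < ⊤ := by
        rw [lt_top_iff_ne_top]
        intro htop
        rw [Subgroup.subgroupOf_eq_top] at htop
        exact hcon htop
      haveI : Group.IsNilpotent ↥S := hSpgroup.isNilpotent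
      have hnc := normalizerCondition_of_isNilpotent (G := ↥S)
      obtain ⟨x, hx1, hx2⟩ := SetLike.exists_of_lt (hnc _ hlt)
      apply hx2
      rw [Subgroup.mem_subgroupOf]
      have hxK : (x : G) ∈ Subgroup.normalizer (K : Set G) := by
        rw [Subgroup.mem_normalizer_iff]
        rw [Subgroup.mem_normalizer_iff] at hx1
        intro y
        constructor
        · intro hy
          have hyS : y ∈ S := hKS hy
          have := (hx1 ⟨y, hyS⟩).mp (by rwa [Subgroup.mem_subgroupOf])
          rw [Subgroup.mem_subgroupOf] at this
          simpa using this
        · intro hy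
          have hzS : (x : G) * y * (x : G)⁻¹ ∈ S := hKS hy
          have hyS : y ∈ S := by
            have := S.mul_mem (S.mul_mem (S.inv_mem x.2) hzS) x.2
            simpa [mul_assoc] using this
          have := (hx1 ⟨y, hyS⟩).mpr (by rw [Subgroup.mem_subgroupOf]; simpa using hy)
          rwa [Subgroup.mem_subgroupOf] at this
      exact ⟨hKN hxK, x.2⟩
    have hSnorm : S ≤ Subgroup.normalizer (H : Set G) := hSK.trans inf_le_left
    have final : Subgroup.normalizer (S : Set G) ≤ Subgroup.normalizer (H : Set G) :=
      hSC S le_sup_left (aux_normal_subgroupOf hSnorm)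
    exact hDS.trans final
end
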